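/- arXiv:2109.12954 — 4 statements merged into one kernel-verified Lean document; each statement's English description precedes it below -/
import Mathlib

section
/- Let (C,E,s) be an n-exangulated category and suppose the 0-th differential [f₀; g₀] : A₀ → A₁ ⊕ B₁ of a distinguished n-exangle A₀ → A₁ ⊕ B₁ →([f₁,g₁]) A₂ → ⋯ → A_{n+1} satisfies g₀ = 0. Then g₁ : B₁ → A₂ is a split monomorphism (a section). -/
open CategoryTheory CategoryTheory.Limits Opposite ZeroObject

universe v u

namespace NExangPaper

attribute [local instance] CategoryTheory.Limits.hasBinaryBiproducts_of_finite_biproducts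


variable {C : Type u} [Category.{v} C] [Preadditive C]

/-- `f : X ⟶ Y` lies in the Jacobson radical `rad_C` of the preadditive category `C`:
this is the standard characterization `∀ g, 𝟙 X - g ∘ f` is invertible, which for a
Krull–Schmidt category agrees with the ideal whose value at `(A,A)` is the Jacobson
radical of `End A`. -/
def InRad {X Y : C} (f : X ⟶ Y) : Prop := ∀ g : Y ⟶ X, IsIso (𝟙 X - f ≫ g)

/-- `C` is a Krull–Schmidt category: every object is a finite direct sum of objects with
local endomorphism rings. -/
def IsKrullSchmidt (C : Type u) [Category.{v} C] [Preadditive C] [HasFiniteBiproducts C] : Prop :=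
  ∀ X : C, ∃ (k : ℕ) (Y : Fin k → C) (_ : X ≅ ⨁ Y), ∀ i, IsLocalRing (End (Y i))

/-- `Z` belongs to `add W`, i.e. `Z` is a direct summand of a finite direct sum of copies of `W`. -/
def InAdd {C : Type u} [Category.{v} C] [Preadditive C] [HasFiniteBiproducts C]
    (W Z : C) : Prop :=
  ∃ (k : ℕ) (r : Z ⟶ ⨁ fun _ : Fin k => W) (s : (⨁ fun _ : Fin k => W) ⟶ Z), r ≫ s = 𝟙 Z

/-- An object of the category `C^{n+2}_C` of complexes concentrated in degrees `0,…,n+1`.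
(The terms in degrees `> n+1` are irrelevant junk; all conditions only concern degrees
`0,…,n+1`.) -/
structure NComplex (C : Type u) [Category.{v} C] [Preadditive C] (n : ℕ) where
  X : ℕ → C
  d : ∀ i, X i ⟶ X (i + 1)
  dd : ∀ i, i + 1 ≤ n → d i ≫ d (i + 1) = 0

variable {n : ℕ}

/-- A morphism of complexes concentrated in degrees `0,…,n+1`. -/
@[ext]
structure ChainMap (X Y : NComplex C n) where
  f : ∀ i, X.X i ⟶ Y.X i
  comm : ∀ i, i ≤ n → X.d i ≫ f (i + 1) = f i ≫ Y.d i

def ChainMap.id (X : NComplex C n) : ChainMap X X where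
  f _ := 𝟙 _
  comm _ _ := by simp

def ChainMap.comp {X Y Z : NComplex C n} (φ : ChainMap X Y) (ψ : ChainMap Y Z) :
    ChainMap X Z where
  f i := φ.f i ≫ ψ.f i
  comm i hi := by rw [← Category.assoc, φ.comm i hi, Category.assoc, ψ.comm i hi,
    ← Category.assoc]

/-- A chain homotopy between two morphisms of complexes concentrated in degrees `0,…,n+1`. -/
structure Homotopy' {X Y : NComplex C n} (φ ψ : ChainMap X Y) where
  s : ∀ i, X.X (i + 1) ⟶ Y.X i
  comm0 : φ.f 0 - ψ.f 0 = X.d 0 ≫ s 0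
  comm : ∀ i, i + 1 ≤ n → φ.f (i + 1) - ψ.f (i + 1) = s i ≫ Y.d i + X.d (i + 1) ≫ s (i + 1)
  commTop : φ.f (n + 1) - ψ.f (n + 1) = s n ≫ Y.d n

/-- Homotopy equivalence of complexes concentrated in degrees `0,…,n+1`. -/
def HtpyEquiv (X Y : NComplex C n) : Prop :=
  ∃ (φ : ChainMap X Y) (ψ : ChainMap Y X),
    Nonempty (Homotopy' (φ.comp ψ) (ChainMap.id X)) ∧
    Nonempty (Homotopy' (ψ.comp φ) (ChainMap.id Y))

/-- Homotopy equivalence with identities at the two ends (i.e. homotopy equivalence in the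
category `C^{n+2}_{(A,C)}` of complexes with fixed end terms). -/
def FixedHtpyEquiv (X Y : NComplex C n) (h0 : X.X 0 = Y.X 0)
    (h1 : X.X (n + 1) = Y.X (n + 1)) : Prop :=
  ∃ (φ : ChainMap X Y) (ψ : ChainMap Y X),
    φ.f 0 = eqToHom h0 ∧ φ.f (n + 1) = eqToHom h1 ∧
    ψ.f 0 = eqToHom h0.symm ∧ ψ.f (n + 1) = eqToHom h1.symm ∧
    Nonempty (Homotopy' (φ.comp ψ) (ChainMap.id X)) ∧
    Nonempty (Homotopy' (ψ.comp φ) (ChainMap.id Y))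

/-- An isomorphism of complexes concentrated in degrees `0,…,n+1` (levelwise isomorphisms in
the relevant degrees, commuting with the differentials). -/
structure CpxIso (X Y : NComplex C n) where
  e : ∀ i, i ≤ n + 1 → (X.X i ≅ Y.X i)
  comm : ∀ i (hi : i ≤ n),
    X.d i ≫ (e (i + 1) (by omega)).hom = (e i (by omega)).hom ≫ Y.d i

/-- Degreewise direct sum of complexes. -/
noncomputable def biprodC [HasBinaryBiproducts C] (X Y : NComplex C n) : NComplex C n where
  X i := X.X i ⊞ Y.X i
  d i := biprod.map (X.d i) (Y.d i)
  dd i hi := by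
    ext <;> simp [X.dd i hi, Y.dd i hi]

/-- The complex `0 → ⋯ → 0 → Z →(𝟙) Z → 0 → ⋯ → 0` with `Z` placed in degrees `k` and
`k+1`. -/
noncomputable def splitCpx [HasZeroObject C] (Z : C) (k : ℕ) : NComplex C n where
  X j := if j = k ∨ j = k + 1 then Z else 0
  d j :=
    if h : j = k then
      eqToHom (by subst h; simp)
    else 0
  dd j hj := by
    by_cases h : j = k
    · simp [dif_neg (show ¬ j + 1 = k by omega)]
    · simp [dif_neg h]

/-- The zero complex. -/
noncomputable def zeroCpx [HasZeroObject C] : NComplex C n where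
  X _ := 0
  d _ := 0
  dd _ _ := by simp

/-- Image of a complex under an additive functor. -/
def mapCpx {D : Type u} [Category.{v} D] [Preadditive D] (F : C ⥤ D) [F.Additive]
    (X : NComplex C n) : NComplex D n where
  X i := F.obj (X.X i)
  d i := F.map (X.d i)
  dd i hi := by rw [← F.map_comp, X.dd i hi, F.map_zero]

section Exang

variable (C) (n)

/-- The underlying data of an `n`-exangulated category: an additive `Ab`-valued bifunctor `E`
and a class of distinguished `n`-exangles (a complex concentrated in degrees `0,…,n+1`
together with an `E`-extension attached to its end terms). -/
structure NExangData where
  E : Cᵒᵖ ⥤ C ⥤ AddCommGrpCat.{v}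
  Dist : ∀ X : NComplex C n, ((E.obj (op (X.X (n + 1)))).obj (X.X 0)) → Prop

variable {C n}

/-- Transport of an `E`-extension along equalities of its end objects. -/
def ETransport (E : Cᵒᵖ ⥤ C ⥤ AddCommGrpCat.{v}) {A A' B B' : C} (hA : A = A') (hB : B = B')
    (δ : (E.obj (op B)).obj A) : (E.obj (op B')).obj A' :=
  (E.map (eqToHom hB.symm).op).app A' (((E.obj (op B)).map (eqToHom hA)) δ)

/-- `f` is an `s`-inflation: it is the `0`-th differential of some distinguished `n`-exangle. -/
def NExangData.Inflation (S : NExangData C n) {A B : C} (f : A ⟶ B) : Prop :=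
  ∃ (X : NComplex C n) (δ : (S.E.obj (op (X.X (n + 1)))).obj (X.X 0))
    (h0 : X.X 0 = A) (h1 : X.X 1 = B),
      S.Dist X δ ∧ X.d 0 = eqToHom h0 ≫ f ≫ eqToHom h1.symm

/-- `f` is an `s`-deflation: it is the `n`-th differential of some distinguished `n`-exangle. -/
def NExangData.Deflation (S : NExangData C n) {A B : C} (f : A ⟶ B) : Prop :=
  ∃ (X : NComplex C n) (δ : (S.E.obj (op (X.X (n + 1)))).obj (X.X 0))
    (h0 : X.X n = A) (h1 : X.X (n + 1) = B),
      S.Dist X δ ∧ X.d n = eqToHom h0 ≫ f ≫ eqToHom h1.symm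

/-- `M` is (a choice of) the mapping cone of a morphism `f• : X• → Y•` with `f₀ = id`:
`M : X₁ → X₂ ⊕ Y₁ → ⋯ → X_{n+1} ⊕ Y_n → Y_{n+1}`, encoded via binary biproduct (bicone)
data in the middle degrees and the usual matrix differentials. -/
def IsMappingCone {X Y : NComplex C n} (φ : ChainMap X Y) (M : NComplex C n) : Prop :=
  ∃ (h0 : M.X 0 = X.X 1) (htop : M.X (n + 1) = Y.X (n + 1))
    (p : ∀ i, 1 ≤ i → i ≤ n → (M.X i ⟶ X.X (i + 1)))
    (q : ∀ i, 1 ≤ i → i ≤ n → (M.X i ⟶ Y.X i))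
    (ι₁ : ∀ i, 1 ≤ i → i ≤ n → (X.X (i + 1) ⟶ M.X i))
    (ι₂ : ∀ i, 1 ≤ i → i ≤ n → (Y.X i ⟶ M.X i)),
    (∀ i (h1 : 1 ≤ i) (h2 : i ≤ n),
      ι₁ i h1 h2 ≫ p i h1 h2 = 𝟙 _ ∧ ι₂ i h1 h2 ≫ q i h1 h2 = 𝟙 _ ∧
      ι₁ i h1 h2 ≫ q i h1 h2 = 0 ∧ ι₂ i h1 h2 ≫ p i h1 h2 = 0 ∧
      p i h1 h2 ≫ ι₁ i h1 h2 + q i h1 h2 ≫ ι₂ i h1 h2 = 𝟙 (M.X i)) ∧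
    (∀ hn : 1 ≤ n,
      M.d 0 ≫ p 1 le_rfl hn = eqToHom h0 ≫ (-(X.d 1)) ∧
      M.d 0 ≫ q 1 le_rfl hn = eqToHom h0 ≫ φ.f 1) ∧
    (∀ i (h1 : 1 ≤ i) (h2 : i + 1 ≤ n),
      M.d i = p i h1 (by omega) ≫ (-(X.d (i + 1))) ≫ ι₁ (i + 1) (by omega) h2 +
        p i h1 (by omega) ≫ φ.f (i + 1) ≫ ι₂ (i + 1) (by omega) h2 +
        q i h1 (by omega) ≫ Y.d i ≫ ι₂ (i + 1) (by omega) h2) ∧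
    (∀ hn : 1 ≤ n,
      M.d n = p n hn le_rfl ≫ φ.f (n + 1) ≫ eqToHom htop.symm +
        q n hn le_rfl ≫ Y.d n ≫ eqToHom htop.symm)

/-- `N` is (a choice of) the mapping cocone of a morphism `f• : X• → Y•` with `f_{n+1} = id`:
`N : X₀ → X₁ ⊕ Y₀ → ⋯ → X_n ⊕ Y_{n-1} → Y_n`, encoded via binary biproduct (bicone) data. -/
def IsMappingCocone {X Y : NComplex C n} (φ : ChainMap X Y) (N : NComplex C n) : Prop :=
  ∃ (h0 : N.X 0 = X.X 0) (htop : N.X (n + 1) = Y.X n)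
    (p : ∀ j, j + 1 ≤ n → (N.X (j + 1) ⟶ X.X (j + 1)))
    (q : ∀ j, j + 1 ≤ n → (N.X (j + 1) ⟶ Y.X j))
    (ι₁ : ∀ j, j + 1 ≤ n → (X.X (j + 1) ⟶ N.X (j + 1)))
    (ι₂ : ∀ j, j + 1 ≤ n → (Y.X j ⟶ N.X (j + 1))),
    (∀ j (hj : j + 1 ≤ n),
      ι₁ j hj ≫ p j hj = 𝟙 _ ∧ ι₂ j hj ≫ q j hj = 𝟙 _ ∧
      ι₁ j hj ≫ q j hj = 0 ∧ ι₂ j hj ≫ p j hj = 0 ∧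
      p j hj ≫ ι₁ j hj + q j hj ≫ ι₂ j hj = 𝟙 (N.X (j + 1))) ∧
    (∀ hn : 1 ≤ n,
      N.d 0 = eqToHom h0 ≫ ((-(X.d 0)) ≫ ι₁ 0 hn + φ.f 0 ≫ ι₂ 0 hn)) ∧
    (∀ j (hj : j + 2 ≤ n),
      N.d (j + 1) = p j (by omega) ≫ (-(X.d (j + 1))) ≫ ι₁ (j + 1) hj +
        p j (by omega) ≫ φ.f (j + 1) ≫ ι₂ (j + 1) hj +
        q j (by omega) ≫ Y.d j ≫ ι₂ (j + 1) hj) ∧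
    (∀ j (hj : j + 1 = n),
      N.d (j + 1) = p j (by omega) ≫ φ.f (j + 1) ≫ eqToHom (by rw [hj, htop]) +
        q j (by omega) ≫ Y.d j ≫ eqToHom (by rw [hj, htop]))

variable (C n)

/-- An `n`-exangulated category `(C, E, s)` in the sense of Herschend–Liu–Nakaoka, encoded by
its additive bifunctor `E`, the class `Dist` of (`s`-)distinguished `n`-exangles, and the
axioms: `E` is biadditive, distinguished `n`-exangles are `n`-exangles (R1), the realization
is defined on every extension (R0 existence of lifts, surjectivity of `s`, invariance under
homotopy equivalence with fixed ends), (R2), (EA1), (EA2) and (EA2ᵒᵖ). -/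
structure NExang [HasZeroObject C] extends NExangData C n where
  additive_snd : ∀ A : Cᵒᵖ, (E.obj A).Additive
  additive_fst : ∀ B : C, (E.flip.obj B).Additive
  -- (R1): distinguished n-exangles are n-exangles
  ex_contra_mid : ∀ X δ, Dist X δ → ∀ i, i + 1 ≤ n → ∀ (W : C) (h : W ⟶ X.X (i + 1)),
    h ≫ X.d (i + 1) = 0 → ∃ g : W ⟶ X.X i, g ≫ X.d i = h
  ex_contra_top : ∀ X δ, Dist X δ → ∀ (W : C) (h : W ⟶ X.X (n + 1)),
    (E.map h.op).app (X.X 0) δ = 0 → ∃ g : W ⟶ X.X n, g ≫ X.d n = h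
  ex_co_mid : ∀ X δ, Dist X δ → ∀ i, i + 1 ≤ n → ∀ (W : C) (h : X.X (i + 1) ⟶ W),
    X.d i ≫ h = 0 → ∃ g : X.X (i + 2) ⟶ W, X.d (i + 1) ≫ g = h
  ex_co_bot : ∀ X δ, Dist X δ → ∀ (W : C) (h : X.X 0 ⟶ W),
    ((E.obj (op (X.X (n + 1)))).map h) δ = 0 → ∃ g : X.X 1 ⟶ W, X.d 0 ≫ g = h
  attached_push : ∀ X δ, Dist X δ → ((E.obj (op (X.X (n + 1)))).map (X.d 0)) δ = 0
  attached_pull : ∀ X δ, Dist X δ → (E.map (X.d n).op).app (X.X 0) δ = 0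
  -- (R0): lifts of morphisms of extensions
  lift : ∀ X Y δ ρ, Dist X δ → Dist Y ρ →
    ∀ (a : X.X 0 ⟶ Y.X 0) (c : X.X (n + 1) ⟶ Y.X (n + 1)),
      ((E.obj (op (X.X (n + 1)))).map a) δ = (E.map c.op).app (Y.X 0) ρ →
      ∃ φ : ChainMap X Y, φ.f 0 = a ∧ φ.f (n + 1) = c
  -- `s` realizes every extension
  realize : ∀ (A B : C) (δ : (E.obj (op B)).obj A),
    ∃ (X : NComplex C n) (h0 : X.X 0 = A) (h1 : X.X (n + 1) = B),
      Dist X (ETransport E h0.symm h1.symm δ)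
  -- `s(δ)` is a single homotopy class with fixed ends…
  unique : ∀ X Y δ (h0 : X.X 0 = Y.X 0) (h1 : X.X (n + 1) = Y.X (n + 1)),
    Dist X δ → Dist Y (ETransport E h0 h1 δ) → FixedHtpyEquiv X Y h0 h1
  -- …and is closed under homotopy equivalences with fixed ends
  closedHtpy : ∀ X Y δ (h0 : X.X 0 = Y.X 0) (h1 : X.X (n + 1) = Y.X (n + 1)),
    Dist X δ → FixedHtpyEquiv X Y h0 h1 → Dist Y (ETransport E h0 h1 δ)
  -- (R2)
  realize_zero₁ : ∀ A : C, Dist (splitCpx A 0) 0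
  realize_zero₂ : ∀ A : C, Dist (splitCpx A n) 0
  -- (EA1)
  ea1_infl : ∀ {A B Z : C} (f : A ⟶ B) (g : B ⟶ Z),
    toNExangData.Inflation f → toNExangData.Inflation g → toNExangData.Inflation (f ≫ g)
  ea1_defl : ∀ {A B Z : C} (f : A ⟶ B) (g : B ⟶ Z),
    toNExangData.Deflation f → toNExangData.Deflation g → toNExangData.Deflation (f ≫ g)
  -- (EA2): good lifts of (𝟙, c) exist, with distinguished mapping cone
  ea2 : ∀ {A D Co : C} (ρ : (E.obj (op D)).obj A) (c : Co ⟶ D) (X Y : NComplex C n)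
    (hX0 : X.X 0 = A) (hXn : X.X (n + 1) = Co) (hY0 : Y.X 0 = A) (hYn : Y.X (n + 1) = D),
    Dist X (ETransport E hX0.symm hXn.symm ((E.map c.op).app A ρ)) →
    Dist Y (ETransport E hY0.symm hYn.symm ρ) →
    ∃ φ : ChainMap X Y, φ.f 0 = eqToHom (hX0.trans hY0.symm) ∧
      φ.f (n + 1) = eqToHom hXn ≫ c ≫ eqToHom hYn.symm ∧
      ∃ M : NComplex C n, IsMappingCone φ M ∧
        ∃ (hM0 : M.X 0 = X.X 1) (hMn : M.X (n + 1) = Y.X (n + 1)),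
          Dist M (ETransport E hM0.symm (hMn.trans hYn).symm
            (((E.obj (op D)).map (eqToHom hX0.symm ≫ X.d 0)) ρ))
  -- (EA2ᵒᵖ): good lifts of (a, 𝟙) exist, with distinguished mapping cocone
  ea2op : ∀ {A B D : C} (ρ : (E.obj (op D)).obj A) (a : A ⟶ B) (X Y : NComplex C n)
    (hX0 : X.X 0 = A) (hXn : X.X (n + 1) = D) (hY0 : Y.X 0 = B) (hYn : Y.X (n + 1) = D),
    Dist X (ETransport E hX0.symm hXn.symm ρ) →
    Dist Y (ETransport E hY0.symm hYn.symm (((E.obj (op D)).map a) ρ)) →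
    ∃ φ : ChainMap X Y, φ.f 0 = eqToHom hX0 ≫ a ≫ eqToHom hY0.symm ∧
      φ.f (n + 1) = eqToHom (hXn.trans hYn.symm) ∧
      ∃ N : NComplex C n, IsMappingCocone φ N ∧
        ∃ (hN0 : N.X 0 = X.X 0) (hNn : N.X (n + 1) = Y.X n),
          Dist N (ETransport E (hN0.trans hX0).symm hNn.symm
            ((E.map (Y.d n ≫ eqToHom hYn).op).app A ρ))

end Exang

section Sub

variable {C : Type u} [Category.{v} C] [Preadditive C] {n : ℕ}

/-- The subcategory determined by `𝒜 ⊆ C` is closed under isomorphisms, finite direct sums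
and direct summands. -/
def GoodSubcat [HasBinaryBiproducts C] (𝒜 : Set C) : Prop :=
  (∀ (A B : C), A ∈ 𝒜 → (A ≅ B) → B ∈ 𝒜) ∧
  (∀ (A B : C), A ∈ 𝒜 → B ∈ 𝒜 → (A ⊞ B) ∈ 𝒜) ∧
  (∀ (A B : C) (r : A ⟶ B) (s : B ⟶ A), r ≫ s = 𝟙 A → B ∈ 𝒜 → A ∈ 𝒜)

/-- `𝒜` is an `n`-extension closed subcategory of `(C, E, s)`: every `E`-extension between
objects of `𝒜` is realized by a distinguished `n`-exangle whose terms in degrees `1,…,n`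
belong to `𝒜`. -/
def NExtClosed (S : NExangData C n) (𝒜 : Set C) : Prop :=
  ∀ (A B : C), A ∈ 𝒜 → B ∈ 𝒜 → ∀ δ : (S.E.obj (op B)).obj A,
    ∃ (X : NComplex C n) (h0 : X.X 0 = A) (h1 : X.X (n + 1) = B),
      S.Dist X (ETransport S.E h0.symm h1.symm δ) ∧ ∀ i, 1 ≤ i → i ≤ n → X.X i ∈ 𝒜

/-- `f` is a `t`-inflation for the structure inherited by the `n`-extension closed
subcategory `𝒜`: it is the `0`-th differential of a distinguished `n`-exangle of `C` all of
whose terms in degrees `1,…,n+1` lie in `𝒜`. -/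
def TInfl (S : NExangData C n) (𝒜 : Set C) {A B : C} (f : A ⟶ B) : Prop :=
  ∃ (X : NComplex C n) (δ : (S.E.obj (op (X.X (n + 1)))).obj (X.X 0))
    (h0 : X.X 0 = A) (h1 : X.X 1 = B),
      S.Dist X δ ∧ (∀ i, 1 ≤ i → i ≤ n + 1 → X.X i ∈ 𝒜) ∧
      X.d 0 = eqToHom h0 ≫ f ≫ eqToHom h1.symm

/-- `P` is a projective object of the `n`-exangulated category. -/
def IsProj (S : NExangData C n) (P : C) : Prop :=
  ∀ X δ, S.Dist X δ → ∀ c : P ⟶ X.X (n + 1), ∃ b : P ⟶ X.X n, b ≫ X.d n = c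

/-- `I` is an injective object of the `n`-exangulated category. -/
def IsInj (S : NExangData C n) (I : C) : Prop :=
  ∀ X δ, S.Dist X δ → ∀ c : X.X 0 ⟶ I, ∃ b : X.X 1 ⟶ I, X.d 0 ≫ b = c

/-- The `n`-exangulated category has enough projectives. -/
def EnoughProj (S : NExangData C n) : Prop :=
  ∀ Z : C, ∃ (X : NComplex C n) (δ : (S.E.obj (op (X.X (n + 1)))).obj (X.X 0)),
    X.X (n + 1) = Z ∧ S.Dist X δ ∧ ∀ i, 1 ≤ i → i ≤ n → IsProj S (X.X i)

/-- The `n`-exangulated category has enough injectives. -/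
def EnoughInj (S : NExangData C n) : Prop :=
  ∀ Z : C, ∃ (X : NComplex C n) (δ : (S.E.obj (op (X.X (n + 1)))).obj (X.X 0)),
    X.X 0 = Z ∧ S.Dist X δ ∧ ∀ i, 1 ≤ i → i ≤ n → IsInj S (X.X i)

/-- `Ω𝒜 = CoCone(𝒫, 𝒜)`: objects `B` admitting a distinguished `n`-exangle
`B → P₁ → ⋯ → P_n → A'` with all `P_i` projective and `A' ∈ 𝒜`. -/
def OmegaSet (S : NExangData C n) (𝒜 : Set C) : Set C :=
  {B | ∃ (X : NComplex C n) (δ : (S.E.obj (op (X.X (n + 1)))).obj (X.X 0)),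
    X.X 0 = B ∧ S.Dist X δ ∧ (∀ i, 1 ≤ i → i ≤ n → IsProj S (X.X i)) ∧ X.X (n + 1) ∈ 𝒜}

/-- `Σ𝒜 = Cone(𝒜, ℐ)`: objects `Z` admitting a distinguished `n`-exangle
`A' → I₁ → ⋯ → I_n → Z` with all `I_i` injective and `A' ∈ 𝒜`. -/
def SigmaSet (S : NExangData C n) (𝒜 : Set C) : Set C :=
  {Z | ∃ (X : NComplex C n) (δ : (S.E.obj (op (X.X (n + 1)))).obj (X.X 0)),
    X.X (n + 1) = Z ∧ S.Dist X δ ∧ (∀ i, 1 ≤ i → i ≤ n → IsInj S (X.X i)) ∧ X.X 0 ∈ 𝒜}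

end Sub

section NExact

variable {C : Type u} [Category.{v} C] [Preadditive C] {n : ℕ}

/-- A complex concentrated in degrees `0,…,n+1` is an `n`-exact sequence: for every object
`W` the induced sequences `0 → Hom(W,X₀) → ⋯ → Hom(W,X_{n+1})` and
`0 → Hom(X_{n+1},W) → ⋯ → Hom(X₀,W)` are exact. -/
structure IsNExactSeq (X : NComplex C n) : Prop where
  mono : ∀ (W : C) (h : W ⟶ X.X 0), h ≫ X.d 0 = 0 → h = 0
  epi : ∀ (W : C) (h : X.X (n + 1) ⟶ W), X.d n ≫ h = 0 → h = 0
  ex_contra : ∀ i, i + 1 ≤ n → ∀ (W : C) (h : W ⟶ X.X (i + 1)),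
    h ≫ X.d (i + 1) = 0 → ∃ g : W ⟶ X.X i, g ≫ X.d i = h
  ex_co : ∀ i, i + 1 ≤ n → ∀ (W : C) (h : X.X (i + 1) ⟶ W),
    X.d i ≫ h = 0 → ∃ g : X.X (i + 2) ⟶ W, X.d (i + 1) ≫ g = h

/-- A weak isomorphism of `n`-exact sequences: a morphism `f•` such that `f_i` and `f_{i+1}`
are isomorphisms for some `0 ≤ i ≤ n+1` (with `f_{n+2} := f₀`). -/
def IsWeakIso {X Y : NComplex C n} (φ : ChainMap X Y) : Prop :=
  (∃ i, i ≤ n ∧ IsIso (φ.f i) ∧ IsIso (φ.f (i + 1))) ∨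
  (IsIso (φ.f (n + 1)) ∧ IsIso (φ.f 0))

/-- `f• : X• → Y•` (with `f_{n+1}` an identification of the top terms) is an `n`-pushout
diagram of the bottom part `X₀ → ⋯ → X_n` along `f₀`: the mapping-cone complex
`X₀ → X₁ ⊕ Y₀ → ⋯ → X_n ⊕ Y_{n-1} → Y_n` is right exact, written out componentwise. -/
structure IsNPushout {X Y : NComplex C n} (φ : ChainMap X Y) : Prop where
  inj : ∀ k, k + 1 = n → ∀ (W : C) (h : Y.X (k + 1) ⟶ W),
    φ.f (k + 1) ≫ h = 0 → Y.d k ≫ h = 0 → h = 0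
  ex1 : 2 ≤ n → ∀ (W : C) (u : X.X 1 ⟶ W) (v : Y.X 0 ⟶ W),
    φ.f 0 ≫ v = X.d 0 ≫ u →
    ∃ (u' : X.X 2 ⟶ W) (v' : Y.X 1 ⟶ W),
      u = φ.f 1 ≫ v' - X.d 1 ≫ u' ∧ v = Y.d 0 ≫ v'
  exMid : ∀ k, k + 3 ≤ n → ∀ (W : C) (u : X.X (k + 2) ⟶ W) (v : Y.X (k + 1) ⟶ W),
    φ.f (k + 1) ≫ v = X.d (k + 1) ≫ u → Y.d k ≫ v = 0 →
    ∃ (u' : X.X (k + 3) ⟶ W) (v' : Y.X (k + 2) ⟶ W),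
      u = φ.f (k + 2) ≫ v' - X.d (k + 2) ≫ u' ∧ v = Y.d (k + 1) ≫ v'
  exTop : ∀ k, k + 2 = n → ∀ (W : C) (u : X.X (k + 2) ⟶ W) (v : Y.X (k + 1) ⟶ W),
    φ.f (k + 1) ≫ v = X.d (k + 1) ≫ u → Y.d k ≫ v = 0 →
    ∃ h : Y.X (k + 2) ⟶ W, u = φ.f (k + 2) ≫ h ∧ v = Y.d (k + 1) ≫ h
  exTop1 : 1 = n → ∀ (W : C) (u : X.X 1 ⟶ W) (v : Y.X 0 ⟶ W),
    φ.f 0 ≫ v = X.d 0 ≫ u →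
    ∃ h : Y.X 1 ⟶ W, u = φ.f 1 ≫ h ∧ v = Y.d 0 ≫ h

/-- `f• : X• → Y•` (with `f₀` an identification of the bottom terms) is an `n`-pullback
diagram of the top part `Y₁ → ⋯ → Y_{n+1}` along `f_{n+1}`: the complex
`X₁ → X₂ ⊕ Y₁ → ⋯ → X_{n+1} ⊕ Y_n → Y_{n+1}` is left exact, written out componentwise. -/
structure IsNPullback {X Y : NComplex C n} (φ : ChainMap X Y) : Prop where
  inj : ∀ (W : C) (h : W ⟶ X.X 1), h ≫ X.d 1 = 0 → h ≫ φ.f 1 = 0 → h = 0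
  ex1 : 2 ≤ n → ∀ (W : C) (u : W ⟶ X.X 2) (v : W ⟶ Y.X 1),
    u ≫ X.d 2 = 0 → u ≫ φ.f 2 + v ≫ Y.d 1 = 0 →
    ∃ w : W ⟶ X.X 1, u = -(w ≫ X.d 1) ∧ v = w ≫ φ.f 1
  exMid : ∀ k, k + 3 ≤ n → ∀ (W : C) (u : W ⟶ X.X (k + 3)) (v : W ⟶ Y.X (k + 2)),
    u ≫ X.d (k + 3) = 0 → u ≫ φ.f (k + 3) + v ≫ Y.d (k + 2) = 0 →
    ∃ (u₀ : W ⟶ X.X (k + 2)) (v₀ : W ⟶ Y.X (k + 1)),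
      u = -(u₀ ≫ X.d (k + 2)) ∧ v = u₀ ≫ φ.f (k + 2) + v₀ ≫ Y.d (k + 1)
  exTop : ∀ k, k + 2 = n → ∀ (W : C) (u : W ⟶ X.X (k + 3)) (v : W ⟶ Y.X (k + 2)),
    u ≫ φ.f (k + 3) + v ≫ Y.d (k + 2) = 0 →
    ∃ (u₀ : W ⟶ X.X (k + 2)) (v₀ : W ⟶ Y.X (k + 1)),
      u = -(u₀ ≫ X.d (k + 2)) ∧ v = u₀ ≫ φ.f (k + 2) + v₀ ≫ Y.d (k + 1)
  exTop1 : 1 = n → ∀ (W : C) (u : W ⟶ X.X 2) (v : W ⟶ Y.X 1),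
    u ≫ φ.f 2 + v ≫ Y.d 1 = 0 →
    ∃ w : W ⟶ X.X 1, u = -(w ≫ X.d 1) ∧ v = w ≫ φ.f 1

variable (C n)

/-- An `n`-exact category in the sense of Jasso: an additive category together with a class
of `n`-exact sequences (the admissible ones, or conflations), closed under weak
isomorphisms, containing the trivial sequences and satisfying the axioms (E1), (E1ᵒᵖ),
(E2) (existence of `n`-pushouts of conflations along morphisms from the first term) and
(E2ᵒᵖ). -/
structure NExactCategory [HasZeroObject C] where
  conflation : NComplex C n → Prop
  nexact : ∀ X, conflation X → IsNExactSeq X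
  closed_weakIso₁ : ∀ (X Y : NComplex C n) (φ : ChainMap X Y),
    conflation X → IsNExactSeq Y → IsWeakIso φ → conflation Y
  closed_weakIso₂ : ∀ (X Y : NComplex C n) (φ : ChainMap X Y),
    conflation Y → IsNExactSeq X → IsWeakIso φ → conflation X
  e0 : ∀ A : C, conflation (splitCpx A 0)
  e0' : ∀ A : C, conflation (splitCpx A n)
  e1 : ∀ {A B Z : C} (f : A ⟶ B) (g : B ⟶ Z),
    (∃ (X : NComplex C n) (h0 : X.X 0 = A) (h1 : X.X 1 = B), conflation X ∧
        X.d 0 = eqToHom h0 ≫ f ≫ eqToHom h1.symm) →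
    (∃ (X : NComplex C n) (h0 : X.X 0 = B) (h1 : X.X 1 = Z), conflation X ∧
        X.d 0 = eqToHom h0 ≫ g ≫ eqToHom h1.symm) →
    (∃ (X : NComplex C n) (h0 : X.X 0 = A) (h1 : X.X 1 = Z), conflation X ∧
        X.d 0 = eqToHom h0 ≫ (f ≫ g) ≫ eqToHom h1.symm)
  e1op : ∀ {A B Z : C} (f : A ⟶ B) (g : B ⟶ Z),
    (∃ (X : NComplex C n) (h0 : X.X n = A) (h1 : X.X (n + 1) = B), conflation X ∧
        X.d n = eqToHom h0 ≫ f ≫ eqToHom h1.symm) →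
    (∃ (X : NComplex C n) (h0 : X.X n = B) (h1 : X.X (n + 1) = Z), conflation X ∧
        X.d n = eqToHom h0 ≫ g ≫ eqToHom h1.symm) →
    (∃ (X : NComplex C n) (h0 : X.X n = A) (h1 : X.X (n + 1) = Z), conflation X ∧
        X.d n = eqToHom h0 ≫ (f ≫ g) ≫ eqToHom h1.symm)
  e2 : ∀ X, conflation X → ∀ (B : C) (g : X.X 0 ⟶ B),
    ∃ (Y : NComplex C n) (φ : ChainMap X Y) (h0 : Y.X 0 = B)
      (htop : X.X (n + 1) = Y.X (n + 1)),
      φ.f 0 = g ≫ eqToHom h0.symm ∧ φ.f (n + 1) = eqToHom htop ∧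
      IsNPushout φ ∧ conflation Y
  e2op : ∀ Y, conflation Y → ∀ (B : C) (g : B ⟶ Y.X (n + 1)),
    ∃ (X : NComplex C n) (φ : ChainMap X Y) (htop : X.X (n + 1) = B)
      (h0 : X.X 0 = Y.X 0),
      φ.f (n + 1) = eqToHom htop ≫ g ∧ φ.f 0 = eqToHom h0 ∧
      IsNPullback φ ∧ conflation X

end NExact


/-- A distinguished `n`-exangle is minimal if all its inner differentials
`X₁ → X₂, …, X_{n-1} → X_n` lie in the Jacobson radical of `C`. -/
def MinimalCpx {C : Type u} [Category.{v} C] [Preadditive C] {n : ℕ} (X : NComplex C n) :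
    Prop :=
  ∀ i, 1 ≤ i → i + 1 ≤ n → InRad (X.d i)

/-- Direct sum of a finite list of split complexes `split_{p.2}(p.1)`. -/
noncomputable def sumSplitCpx {C : Type u} [Category.{v} C] [Preadditive C] [HasZeroObject C]
    [HasBinaryBiproducts C] {n : ℕ} (L : List (C × ℕ)) : NComplex C n :=
  L.foldr (fun p acc => biprodC (splitCpx p.1 p.2) acc) zeroCpx


/-- first step of Lemma 3.12.  If a distinguished `n`-exangle has `0`-th
differential `[f₀; g₀] : A₀ ⟶ A₁ ⊕ B₁` with `g₀ = 0`, then the component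
`g₁ : B₁ ⟶ A₂` of the next differential is a split monomorphism (a section). -/
theorem stmt10 {C : Type u} [Category.{v} C] [Preadditive C] [HasZeroObject C]
    [HasFiniteBiproducts C] {n : ℕ} (hn : 0 < n) (S : NExang C n)
    (A₁ B₁ : C) (X : NComplex C n) (δ : (S.E.obj (op (X.X (n + 1)))).obj (X.X 0))
    (hX : S.Dist X δ) (h1 : X.X 1 = (A₁ ⊞ B₁))
    (hg0 : X.d 0 ≫ eqToHom h1 ≫ biprod.snd = 0) :
    ∃ r : X.X 2 ⟶ B₁, (biprod.inr ≫ eqToHom h1.symm ≫ X.d 1) ≫ r = 𝟙 B₁ := by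
  obtain ⟨g, hg⟩ := S.ex_co_mid X δ hX 0 hn B₁ (eqToHom h1 ≫ biprod.snd)
    (by simpa using hg0)
  refine ⟨g, ?_⟩
  rw [Category.assoc, Category.assoc, hg]
  simp

end NExangPaper
end

section
/- Let (C,E,s) be a Krull–Schmidt n-exangulated category with enough projectives, and let A be an n-extension closed full subcategory with Hom_C(A, ΩA) = 0, where ΩA consists of objects B admitting a distinguished n-exangle B → P₁ → ⋯ → P_n → C' with all P_i projective and C' ∈ A. Then every t-inflation in A is a monomorphism in A; that is, if f : A → B occurs as the 0-th differential of a distinguished n-exangle A → B → C₂ → ⋯ → C_{n+1} with C₂,…,C_{n+1} ∈ A, and h : C → A is a morphism in A with f ∘ h = 0, then h = 0. -/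
open CategoryTheory CategoryTheory.Limits Opposite ZeroObject

universe v u

namespace NExangPaper

attribute [local instance] CategoryTheory.Limits.hasBinaryBiproducts_of_finite_biproducts


variable {C : Type u} [Category.{v} C] [Preadditive C]

variable {n : ℕ}

section Stmt11Aux

variable {C : Type u} [Category.{v} C] [Preadditive C] {n : ℕ}

omit [Preadditive C] in
lemma stmt11_pull_pull (E : Cᵒᵖ ⥤ C ⥤ AddCommGrpCat.{v}) {B₁ B₂ B₃ A : C}
    (u : B₂ ⟶ B₁) (v : B₃ ⟶ B₂) (x : (E.obj (op B₁)).obj A) :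
    (E.map v.op).app A ((E.map u.op).app A x) = (E.map (v ≫ u).op).app A x := by
  rw [op_comp, E.map_comp]; rfl

omit [Preadditive C] in
lemma stmt11_push_push (E : Cᵒᵖ ⥤ C ⥤ AddCommGrpCat.{v}) {B A₁ A₂ A₃ : C}
    (g : A₁ ⟶ A₂) (g' : A₂ ⟶ A₃) (x : (E.obj (op B)).obj A₁) :
    (E.obj (op B)).map g' ((E.obj (op B)).map g x) = (E.obj (op B)).map (g ≫ g') x := by
  rw [Functor.map_comp]; rfl

omit [Preadditive C] in
lemma stmt11_pull_push (E : Cᵒᵖ ⥤ C ⥤ AddCommGrpCat.{v}) {B₁ B₂ A₁ A₂ : C}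
    (c : B₂ ⟶ B₁) (g : A₁ ⟶ A₂) (x : (E.obj (op B₁)).obj A₁) :
    (E.map c.op).app A₂ ((E.obj (op B₁)).map g x)
      = (E.obj (op B₂)).map g ((E.map c.op).app A₁ x) :=
  ConcreteCategory.congr_hom ((E.map c.op).naturality g) x

omit [Preadditive C] in
lemma stmt11_push_id (E : Cᵒᵖ ⥤ C ⥤ AddCommGrpCat.{v}) {B A : C} (x : (E.obj (op B)).obj A) :
    (E.obj (op B)).map (𝟙 A) x = x := by
  rw [CategoryTheory.Functor.map_id]; rfl

omit [Preadditive C] in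
lemma stmt11_pull_id (E : Cᵒᵖ ⥤ C ⥤ AddCommGrpCat.{v}) {B A : C} (x : (E.obj (op B)).obj A) :
    (E.map (𝟙 B).op).app A x = x := by
  rw [op_id, CategoryTheory.Functor.map_id]; rfl

lemma stmt11_push_zero_mor (E : Cᵒᵖ ⥤ C ⥤ AddCommGrpCat.{v})
    (hadd : ∀ X : Cᵒᵖ, (E.obj X).Additive) {B A A' : C} (x : (E.obj (op B)).obj A) :
    (E.obj (op B)).map (0 : A ⟶ A') x = 0 := by
  haveI := hadd (op B)
  rw [CategoryTheory.Functor.map_zero]; rfl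

omit [Preadditive C] in
lemma stmt11_ETransport_self (E : Cᵒᵖ ⥤ C ⥤ AddCommGrpCat.{v}) {A B : C} (hA : A = A) (hB : B = B)
    (δ : (E.obj (op B)).obj A) : ETransport E hA hB δ = δ := by
  show (E.map (eqToHom hB.symm).op).app A ((E.obj (op B)).map (eqToHom hA) δ) = δ
  rw [show eqToHom hA = 𝟙 A from eqToHom_refl A hA,
      show eqToHom hB.symm = 𝟙 B from eqToHom_refl B hB.symm]
  rw [stmt11_push_id, stmt11_pull_id]

omit [Preadditive C] in
lemma stmt11_ETransport_zero (E : Cᵒᵖ ⥤ C ⥤ AddCommGrpCat.{v}) {A A' B B' : C}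
    (hA : A = A') (hB : B = B') :
    ETransport E hA hB (0 : (E.obj (op B)).obj A) = 0 := by
  subst hA; subst hB
  exact stmt11_ETransport_self E rfl rfl 0

lemma stmt11_E_proj_zero [HasZeroObject C] (S : NExang C n) {P V : C}
    (hP : IsProj S.toNExangData P) (μ : (S.E.obj (op P)).obj V) : μ = 0 := by
  obtain ⟨R, hR0, hRn, hRD⟩ := S.realize V P μ
  subst hR0; subst hRn
  rw [stmt11_ETransport_self] at hRD
  obtain ⟨b, hb⟩ := hP R μ hRD (𝟙 _)
  have h2 := S.attached_pull R μ hRD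
  calc μ = (S.E.map (𝟙 (R.X (n+1))).op).app _ μ := (stmt11_pull_id _ _).symm
    _ = (S.E.map (b ≫ R.d n).op).app _ μ := by rw [hb]
    _ = (S.E.map b.op).app _ ((S.E.map (R.d n).op).app _ μ) := (stmt11_pull_pull _ _ _ _).symm
    _ = (S.E.map b.op).app _ 0 := by rw [h2]
    _ = 0 := map_zero _

end Stmt11Aux

/-- Step 1 of Theorem 3.16.  Let `(C,E,s)` be a Krull–Schmidt
`n`-exangulated category with enough projectives and `𝒜` an `n`-extension closed
subcategory with `Hom_C(𝒜, Ω𝒜) = 0`.  Then every `t`-inflation is a monomorphism in `𝒜`. -/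
theorem stmt11 {C : Type u} [Category.{v} C] [Preadditive C] [HasZeroObject C]
    [HasFiniteBiproducts C] {n : ℕ} (hn : 0 < n) (S : NExang C n)
    (hKS : IsKrullSchmidt C) (𝒜 : Set C) (hgood : GoodSubcat 𝒜)
    (hext : NExtClosed S.toNExangData 𝒜)
    (hproj : EnoughProj S.toNExangData)
    (hvan : ∀ A' ∈ 𝒜, ∀ B ∈ OmegaSet S.toNExangData 𝒜, ∀ φ : A' ⟶ B, φ = 0)
    {A B : C} (hA : A ∈ 𝒜) (hB : B ∈ 𝒜) (f : A ⟶ B) (hf : TInfl S.toNExangData 𝒜 f) :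
    ∀ W ∈ 𝒜, ∀ h : W ⟶ A, h ≫ f = 0 → h = 0 := by
  intro W hW h hcomp
  have hn1 : 1 ≤ n := hn
  obtain ⟨X, δ, h0X, h1X, hXDist, hmem, hd0⟩ := hf
  subst h0X; subst h1X
  have hd0' : X.d 0 = f := by simpa using hd0
  have hkill : h ≫ X.d 0 = 0 := by rw [hd0']; exact hcomp
  obtain ⟨Y, δY, hYtop, hYDist, hYproj⟩ := hproj (X.X (n+1))
  have hΩ : Y.X 0 ∈ OmegaSet S.toNExangData 𝒜 := by
    refine ⟨Y, δY, rfl, hYDist, hYproj, ?_⟩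
    rw [hYtop]
    exact hmem (n+1) (by omega) le_rfl
  haveI := S.additive_snd (op (X.X (n+1)))
  set δY' : (S.E.obj (op (X.X (n+1)))).obj (Y.X 0) :=
    (S.E.map (eqToHom hYtop.symm).op).app (Y.X 0) δY with hδY'
  set ξ : (S.E.obj (op (X.X (n+1)))).obj (Y.X 0 ⊞ X.X 0) :=
    (S.E.obj (op (X.X (n+1)))).map biprod.inl δY'
      + (S.E.obj (op (X.X (n+1)))).map biprod.inr δ with hξ
  obtain ⟨G, hG0, hGn, hGDist⟩ := S.realize (Y.X 0 ⊞ X.X 0) (X.X (n+1)) ξ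
  -- the two pushforwards of ξ
  have hsnd : (S.E.obj (op (X.X (n+1)))).map biprod.snd ξ = δ := by
    rw [hξ, map_add, stmt11_push_push, stmt11_push_push, biprod.inl_snd, biprod.inr_snd,
      stmt11_push_zero_mor S.E S.additive_snd, stmt11_push_id, zero_add]
  have hfst : (S.E.obj (op (X.X (n+1)))).map biprod.fst ξ = δY' := by
    rw [hξ, map_add, stmt11_push_push, stmt11_push_push, biprod.inl_fst, biprod.inr_fst,
      stmt11_push_zero_mor S.E S.additive_snd, stmt11_push_id, add_zero]
  have dist₂ : S.Dist X (ETransport S.E (Eq.refl (X.X 0)).symm (Eq.refl (X.X (n+1))).symm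
      ((S.E.obj (op (X.X (n+1)))).map biprod.snd ξ)) := by
    rw [hsnd, stmt11_ETransport_self]; exact hXDist
  have dist₃ : S.Dist Y (ETransport S.E (Eq.refl (Y.X 0)).symm hYtop.symm
      ((S.E.obj (op (X.X (n+1)))).map biprod.fst ξ)) := by
    rw [hfst]
    have e1 : ETransport S.E (Eq.refl (Y.X 0)).symm hYtop.symm δY' = δY := by
      show (S.E.map (eqToHom hYtop.symm.symm).op).app _
          ((S.E.obj (op (X.X (n+1)))).map (eqToHom (Eq.refl (Y.X 0)).symm) δY') = δY
      rw [show eqToHom (Eq.refl (Y.X 0)).symm = 𝟙 (Y.X 0) from eqToHom_refl _ _,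
        stmt11_push_id, hδY', stmt11_pull_pull]
      rw [show eqToHom hYtop.symm.symm ≫ eqToHom hYtop.symm = 𝟙 (Y.X (n+1)) from by
        rw [eqToHom_trans]; exact eqToHom_refl _ _]
      exact stmt11_pull_id _ _
    rw [e1]; exact hYDist
  -- two applications of (EA2op)
  obtain ⟨φX, hφX0, -, N, hcoN, hN0, hNn, hDistN⟩ :=
    S.ea2op ξ (biprod.snd : Y.X 0 ⊞ X.X 0 ⟶ X.X 0) G X hG0 hGn rfl rfl hGDist dist₂
  obtain ⟨φΩ, hφΩ0, -, NΩ, hcoΩ, hNΩ0, hNΩn, hDistNΩ⟩ :=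
    S.ea2op ξ (biprod.fst : Y.X 0 ⊞ X.X 0 ⟶ Y.X 0) G Y hG0 hGn rfl hYtop hGDist dist₃
  -- the extension attached to NΩ vanishes
  have hz : (S.E.map (Y.d n ≫ eqToHom hYtop).op).app (Y.X 0 ⊞ X.X 0) ξ = 0 := by
    rw [hξ, map_add, stmt11_pull_push, stmt11_pull_push, hδY', stmt11_pull_pull]
    rw [show (Y.d n ≫ eqToHom hYtop) ≫ eqToHom hYtop.symm = Y.d n from by
      rw [Category.assoc, eqToHom_trans]
      rw [show eqToHom (hYtop.trans hYtop.symm) = 𝟙 (Y.X (n+1)) from eqToHom_refl _ _]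
      exact Category.comp_id _]
    rw [S.attached_pull Y δY hYDist]
    rw [stmt11_E_proj_zero S (hYproj n hn1 le_rfl)
      ((S.E.map (Y.d n ≫ eqToHom hYtop).op).app (X.X 0) δ)]
    rw [map_zero, map_zero, add_zero]
  rw [hz, stmt11_ETransport_zero] at hDistNΩ
  obtain ⟨r, hr⟩ := S.ex_co_bot NΩ 0 hDistNΩ (Y.X 0 ⊞ X.X 0)
    (eqToHom (hNΩ0.trans hG0)) (map_zero _)
  obtain ⟨h0N, htopN, pN, qN, ι₁N, ι₂N, bicN, hd0N, hdmidN, hdtopN⟩ := hcoN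
  obtain ⟨h0Ω, htopΩ, pΩ, qΩ, ι₁Ω, ι₂Ω, bicΩ, hd0Ω, hdmidΩ, hdtopΩ⟩ := hcoΩ
  have hφΩ0' : φΩ.f 0 = eqToHom hG0 ≫ biprod.fst := by rw [hφΩ0]; simp
  have hφX0' : φX.f 0 = eqToHom hG0 ≫ biprod.snd := by rw [hφX0]; simp
  set mA : X.X 0 ⟶ G.X 1 := biprod.inr ≫ eqToHom hG0.symm ≫ G.d 0 with hmA
  -- mA is a split monomorphism
  have hsplit : mA ≫ (-(ι₁Ω 0 hn1 ≫ r ≫ biprod.snd)) = 𝟙 (X.X 0) := by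
    have e1 : (biprod.inr ≫ eqToHom hG0.symm ≫ eqToHom h0Ω.symm) ≫ NΩ.d 0 ≫ r
        = biprod.inr := by
      rw [hr]; simp [eqToHom_trans]
    rw [hd0Ω hn1, hφΩ0'] at e1
    simp only [Preadditive.comp_add, Preadditive.add_comp, Category.assoc,
      Preadditive.neg_comp, Preadditive.comp_neg, eqToHom_trans, eqToHom_refl,
      Category.id_comp, Category.comp_id, eqToHom_trans_assoc] at e1
    rw [biprod.inr_fst_assoc, zero_comp, add_zero] at e1
    have e2 := congrArg (fun t => t ≫ biprod.snd) e1
    simp only [Category.assoc, Preadditive.neg_comp, biprod.inr_snd] at e2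
    rw [hmA]
    simp only [Category.assoc, Preadditive.comp_neg, Preadditive.neg_comp] at e2 ⊢
    rw [← e2]
  -- the chase on the snd-side cocone
  have hu : (h ≫ ι₂N 0 hn1) ≫ N.d 1 = 0 := by
    rcases Nat.lt_or_ge 1 n with h2 | h2
    · rw [show N.d 1 = _ from hdmidN 0 (by omega)]
      simp only [Preadditive.comp_add, Category.assoc]
      simp [reassoc_of% (bicN 0 hn1).2.2.2.1, reassoc_of% (bicN 0 hn1).2.1,
        reassoc_of% hkill]
    · rw [show N.d 1 = _ from hdtopN 0 (by omega)]
      simp only [Preadditive.comp_add, Category.assoc]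
      simp [reassoc_of% (bicN 0 hn1).2.2.2.1, reassoc_of% (bicN 0 hn1).2.1,
        reassoc_of% hkill]
  obtain ⟨e₁, he₁⟩ := S.ex_contra_mid N _ hDistN 0 (by omega) W (h ≫ ι₂N 0 hn1) hu
  set e₂ : W ⟶ Y.X 0 ⊞ X.X 0 := e₁ ≫ eqToHom h0N ≫ eqToHom hG0 with he₂def
  have hq : e₂ ≫ biprod.snd = h := by
    have t1 : (e₁ ≫ N.d 0) ≫ qN 0 hn1 = h := by
      rw [he₁, Category.assoc, (bicN 0 hn1).2.1, Category.comp_id]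
    rw [hd0N hn1, hφX0'] at t1
    simp only [Preadditive.comp_add, Preadditive.add_comp, Category.assoc,
      Preadditive.neg_comp, Preadditive.comp_neg] at t1
    rw [(bicN 0 hn1).2.2.1, (bicN 0 hn1).2.1] at t1
    simp only [comp_zero, neg_zero, zero_add, Category.comp_id] at t1
    simpa [he₂def, Category.assoc] using t1
  have hGd : e₂ ≫ eqToHom hG0.symm ≫ G.d 0 = 0 := by
    have t3 : (e₁ ≫ N.d 0) ≫ pN 0 hn1 = 0 := by
      rw [he₁, Category.assoc, (bicN 0 hn1).2.2.2.1, comp_zero]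
    rw [hd0N hn1, hφX0'] at t3
    simp only [Preadditive.comp_add, Preadditive.add_comp, Category.assoc,
      Preadditive.neg_comp, Preadditive.comp_neg] at t3
    rw [(bicN 0 hn1).1, (bicN 0 hn1).2.2.2.1] at t3
    simp only [comp_zero, add_zero, Category.comp_id, neg_eq_zero] at t3
    rw [he₂def]
    simpa [Category.assoc, eqToHom_trans] using t3
  have hfst0 : e₂ ≫ biprod.fst = 0 := hvan W hW (Y.X 0) hΩ _
  have he2 : e₂ = h ≫ biprod.inr := by
    have htot : e₂ ≫ (biprod.fst ≫ biprod.inl + biprod.snd ≫ biprod.inr) = e₂ := by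
      rw [biprod.total, Category.comp_id]
    rw [← htot]
    rw [Preadditive.comp_add, ← Category.assoc, ← Category.assoc, hfst0, hq, zero_comp,
      zero_add]
  have hhmA : h ≫ mA = 0 := by
    rw [hmA, ← Category.assoc, ← he2]
    simpa [Category.assoc] using hGd
  calc h = h ≫ 𝟙 (X.X 0) := (Category.comp_id h).symm
    _ = h ≫ mA ≫ (-(ι₁Ω 0 hn1 ≫ r ≫ biprod.snd)) := by rw [hsplit]
    _ = 0 := by rw [← Category.assoc, hhmA, zero_comp]

end NExangPaper
end

section
/- Let T be a Krull–Schmidt triangulated category and A a full subcategory closed under isomorphisms, direct sums, direct summands, and extensions (for every distinguished triangle X → Y → Z → X[1] with X, Z ∈ A, some choice of Y lies in A). If Hom_T(A[1], A) = 0, then A carries the structure of a Quillen exact category, whose conflations are the sequences X → Y → Z in A that fit into a distinguished triangle X → Y → Z → X[1] of T. -/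
open CategoryTheory CategoryTheory.Limits CategoryTheory.Pretriangulated Opposite ZeroObject

universe v u

namespace NExangPaper

attribute [local instance] CategoryTheory.Limits.hasBinaryBiproducts_of_finite_biproducts

variable {C : Type u} [Category.{v} C] [Preadditive C]

variable (C) in
/-- A Quillen exact category: an additive category together with a distinguished class of
kernel–cokernel pairs (the conflations), closed under isomorphism, such that identities are
inflations and deflations, inflations and deflations are closed under composition, pushouts
of inflations along arbitrary morphisms exist and are inflations, and dually for
deflations. -/
structure QuillenExactCategory where
  conflation : ∀ ⦃A B Z : C⦄, (A ⟶ B) → (B ⟶ Z) → Prop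
  comp_zero : ∀ {A B Z : C} {f : A ⟶ B} {g : B ⟶ Z}, conflation f g → f ≫ g = 0
  ker : ∀ {A B Z : C} {f : A ⟶ B} {g : B ⟶ Z}, conflation f g →
    ∀ (W : C) (h : W ⟶ B), h ≫ g = 0 → ∃! k : W ⟶ A, k ≫ f = h
  cok : ∀ {A B Z : C} {f : A ⟶ B} {g : B ⟶ Z}, conflation f g →
    ∀ (W : C) (h : B ⟶ W), f ≫ h = 0 → ∃! k : Z ⟶ W, g ≫ k = h
  iso_closed : ∀ {A B Z A' B' Z' : C} {f : A ⟶ B} {g : B ⟶ Z}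
    (eA : A ≅ A') (eB : B ≅ B') (eZ : Z ≅ Z') (f' : A' ⟶ B') (g' : B' ⟶ Z'),
    conflation f g → f ≫ eB.hom = eA.hom ≫ f' → g ≫ eZ.hom = eB.hom ≫ g' →
    conflation f' g'
  id_infl : ∀ A : C, ∃ (Z : C) (g : A ⟶ Z), conflation (𝟙 A) g
  id_defl : ∀ A : C, ∃ (W : C) (f : W ⟶ A), conflation f (𝟙 A)
  infl_comp : ∀ {A B Z : C} (f : A ⟶ B) (f' : B ⟶ Z),
    (∃ (W : C) (g : B ⟶ W), conflation f g) → (∃ (W : C) (g : Z ⟶ W), conflation f' g) →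
    ∃ (W : C) (g : Z ⟶ W), conflation (f ≫ f') g
  defl_comp : ∀ {A B Z : C} (g : A ⟶ B) (g' : B ⟶ Z),
    (∃ (W : C) (f : W ⟶ A), conflation f g) → (∃ (W : C) (f : W ⟶ B), conflation f g') →
    ∃ (W : C) (f : W ⟶ A), conflation f (g ≫ g')
  pushout : ∀ {A B Z : C} {f : A ⟶ B} {g : B ⟶ Z}, conflation f g →
    ∀ {A' : C} (a : A ⟶ A'), ∃ (B' : C) (f' : A' ⟶ B') (b : B ⟶ B'),
      IsPushout f a b f' ∧ ∃ (W : C) (g' : B' ⟶ W), conflation f' g'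
  pullback : ∀ {A B Z : C} {f : A ⟶ B} {g : B ⟶ Z}, conflation f g →
    ∀ {Z' : C} (c : Z' ⟶ Z), ∃ (B' : C) (g' : B' ⟶ Z') (b : B' ⟶ B),
      IsPullback b g' g c ∧ ∃ (W : C) (f' : W ⟶ B'), conflation f' g'


section Aux

variable {C : Type u} [Category.{v} C] [Preadditive C] [HasZeroObject C]
    [HasShift C ℤ] [∀ k : ℤ, (shiftFunctor C k).Additive] [Pretriangulated C]
variable {𝒜 : Set C}

set_option linter.unusedSectionVars false

lemma shift_inj {X Y : C} {f g : X ⟶ Y}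
    (h : (shiftFunctor C (1:ℤ)).map f = (shiftFunctor C (1:ℤ)).map g) : f = g :=
  (shiftFunctor C (1:ℤ)).map_injective h

lemma shift_inj_zero {X Y : C} {f : X ⟶ Y}
    (h : (shiftFunctor C (1:ℤ)).map f = 0) : f = 0 :=
  shift_inj (by rw [h, Functor.map_zero])

section Wrappers

variable {A B Z : C} {f : A ⟶ B} {g : B ⟶ Z} {h : Z ⟶ A⟦(1:ℤ)⟧}
  (hT : Triangle.mk f g h ∈ distTriang C)

include hT

lemma z₁₂ : f ≫ g = 0 := comp_distTriang_mor_zero₁₂ _ hT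
lemma z₂₃ : g ≫ h = 0 := comp_distTriang_mor_zero₂₃ _ hT
lemma z₃₁ : h ≫ f⟦(1:ℤ)⟧' = 0 := comp_distTriang_mor_zero₃₁ _ hT

lemma ye₂ {X : C} (u : B ⟶ X) (hu : f ≫ u = 0) : ∃ k : Z ⟶ X, u = g ≫ k :=
  Triangle.yoneda_exact₂ _ hT u hu

lemma ye₃ {X : C} (u : Z ⟶ X) (hu : g ≫ u = 0) : ∃ k : A⟦(1:ℤ)⟧ ⟶ X, u = h ≫ k :=
  Triangle.yoneda_exact₃ _ hT u hu

lemma ye₄ {X : C} (u : A⟦(1:ℤ)⟧ ⟶ X) (hu : h ≫ u = 0) :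
    ∃ k : B⟦(1:ℤ)⟧ ⟶ X, u = -(f⟦(1:ℤ)⟧' ≫ k) := by
  obtain ⟨k, hk⟩ := Triangle.yoneda_exact₃ _ (rot_of_distTriang _ hT) u hu
  exact ⟨k, by rw [hk]; simp; exact Preadditive.neg_comp _ _⟩

lemma ce₂ {X : C} (u : X ⟶ B) (hu : u ≫ g = 0) : ∃ k : X ⟶ A, u = k ≫ f :=
  Triangle.coyoneda_exact₂ _ hT u hu

lemma ce₃ {X : C} (u : X ⟶ Z) (hu : u ≫ h = 0) : ∃ k : X ⟶ B, u = k ≫ g :=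
  Triangle.coyoneda_exact₃ _ hT u hu

lemma ce₁ {X : C} (u : X ⟶ A⟦(1:ℤ)⟧) (hu : u ≫ f⟦(1:ℤ)⟧' = 0) :
    ∃ k : X ⟶ Z, u = k ≫ h :=
  Triangle.coyoneda_exact₁ _ hT u hu

variable {A' B' Z' : C} {f' : A' ⟶ B'} {g' : B' ⟶ Z'} {h' : Z' ⟶ A'⟦(1:ℤ)⟧}
  (hT' : Triangle.mk f' g' h' ∈ distTriang C)

include hT'

lemma cdtm (a : A ⟶ A') (b : B ⟶ B') (comm : f ≫ b = a ≫ f') :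
    ∃ c : Z ⟶ Z', g ≫ c = b ≫ g' ∧ h ≫ a⟦(1:ℤ)⟧' = c ≫ h' :=
  complete_distinguished_triangle_morphism _ _ hT hT' a b comm

lemma cdtm₁ (b : B ⟶ B') (c : Z ⟶ Z') (comm : g ≫ c = b ≫ g') :
    ∃ a : A ⟶ A', f ≫ b = a ≫ f' ∧ h ≫ a⟦(1:ℤ)⟧' = c ≫ h' :=
  complete_distinguished_triangle_morphism₁ _ _ hT hT' b c comm

lemma cdtm₂ (a : A ⟶ A') (c : Z ⟶ Z') (comm : h ≫ a⟦(1:ℤ)⟧' = c ≫ h') :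
    ∃ b : B ⟶ B', f ≫ b = a ≫ f' ∧ g ≫ c = b ≫ g' :=
  complete_distinguished_triangle_morphism₂ _ _ hT hT' a c comm

end Wrappers

/-- The triangulated "five-lemma-free" uniqueness: two maps into the kernel agree. -/
lemma conf_ker_uniq (hvan : ∀ X ∈ 𝒜, ∀ Y ∈ 𝒜, ∀ φ : X⟦(1 : ℤ)⟧ ⟶ Y, φ = 0)
    {A B Z : C} {f : A ⟶ B} {g : B ⟶ Z} {h : Z ⟶ A⟦(1:ℤ)⟧}
    (hT : Triangle.mk f g h ∈ distTriang C)
    {W : C} (hW : W ∈ 𝒜) (hZ : Z ∈ 𝒜) {y k : W ⟶ A}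
    (h1 : y ≫ f = k ≫ f) : y = k := by
  have hd : (y - k) ≫ f = 0 := by rw [Preadditive.sub_comp, h1, sub_self]
  obtain ⟨e, he⟩ := ce₁ hT ((y - k)⟦(1:ℤ)⟧')
    (by rw [← Functor.map_comp, hd, Functor.map_zero])
  rw [hvan W hW Z hZ e, zero_comp] at he
  exact sub_eq_zero.mp (shift_inj_zero he)

lemma conf_cok_uniq (hvan : ∀ X ∈ 𝒜, ∀ Y ∈ 𝒜, ∀ φ : X⟦(1 : ℤ)⟧ ⟶ Y, φ = 0)
    {A B Z : C} {f : A ⟶ B} {g : B ⟶ Z} {h : Z ⟶ A⟦(1:ℤ)⟧}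
    (hT : Triangle.mk f g h ∈ distTriang C)
    {W : C} (hA : A ∈ 𝒜) (hW : W ∈ 𝒜) {y k : Z ⟶ W}
    (h1 : g ≫ y = g ≫ k) : y = k := by
  have hd : g ≫ (y - k) = 0 := by rw [Preadditive.comp_sub, h1, sub_self]
  obtain ⟨e, he⟩ := ye₃ hT _ hd
  rw [hvan A hA W hW e, comp_zero] at he
  exact sub_eq_zero.mp he

/-- Conflations are closed under isomorphisms, at the level of the ambient category. -/
lemma iso_tri {A B Z A' B' Z' : C} (a : A ≅ A') (b : B ≅ B') (z : Z ≅ Z')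
    {f : A ⟶ B} {g : B ⟶ Z} {h : Z ⟶ A⟦(1:ℤ)⟧}
    (hT : Triangle.mk f g h ∈ distTriang C)
    {f' : A' ⟶ B'} {g' : B' ⟶ Z'}
    (c1 : f ≫ b.hom = a.hom ≫ f') (c2 : g ≫ z.hom = b.hom ≫ g') :
    Triangle.mk f' g' (z.inv ≫ h ≫ a.hom⟦(1:ℤ)⟧') ∈ distTriang C := by
  refine isomorphic_distinguished _ hT _ ?_
  refine Triangle.isoMk _ _ a.symm b.symm z.symm ?_ ?_ ?_
  · change f' ≫ b.inv = a.inv ≫ f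
    rw [← cancel_epi a.hom, ← Category.assoc, ← c1, Category.assoc, b.hom_inv_id,
      ← Category.assoc, a.hom_inv_id, Category.comp_id, Category.id_comp]
  · change g' ≫ z.inv = b.inv ≫ g
    rw [← cancel_epi b.hom, ← Category.assoc, ← c2, Category.assoc, z.hom_inv_id,
      ← Category.assoc, b.hom_inv_id, Category.comp_id, Category.id_comp]
  · change (z.inv ≫ h ≫ a.hom⟦(1:ℤ)⟧') ≫ a.inv⟦(1:ℤ)⟧' = z.inv ≫ h
    rw [Category.assoc, Category.assoc, ← Functor.map_comp, Iso.hom_inv_id, CategoryTheory.Functor.map_id,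
      Category.comp_id]

/-- The key lemma: the cone of a composition of two "inflations" lies in `𝒜`.
This is the octahedral-axiom-free argument using the vanishing of `Hom(𝒜⟦1⟧, 𝒜)`. -/
lemma cone_mem
    (hret : ∀ (A B : C) (r : A ⟶ B) (s : B ⟶ A), r ≫ s = 𝟙 A → B ∈ 𝒜 → A ∈ 𝒜)
    (hext : ∀ T : Triangle C, T ∈ (distTriang C) → T.obj₁ ∈ 𝒜 → T.obj₃ ∈ 𝒜 → T.obj₂ ∈ 𝒜)
    (hvan : ∀ X ∈ 𝒜, ∀ Y ∈ 𝒜, ∀ φ : X⟦(1 : ℤ)⟧ ⟶ Y, φ = 0)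
    {A B Z W₁ W₂ Q : C} (hA : A ∈ 𝒜) (hW₁ : W₁ ∈ 𝒜) (hW₂ : W₂ ∈ 𝒜)
    {f : A ⟶ B} {g : B ⟶ W₁} {δ₁ : W₁ ⟶ A⟦(1:ℤ)⟧}
    (hT1 : Triangle.mk f g δ₁ ∈ distTriang C)
    {f' : B ⟶ Z} {g₂ : Z ⟶ W₂} {δ₂ : W₂ ⟶ B⟦(1:ℤ)⟧}
    (hT2 : Triangle.mk f' g₂ δ₂ ∈ distTriang C)
    {p : Z ⟶ Q} {q : Q ⟶ A⟦(1:ℤ)⟧}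
    (hT3 : Triangle.mk (f ≫ f') p q ∈ distTriang C) :
    Q ∈ 𝒜 := by
  have hfg : f ≫ g = 0 := z₁₂ hT1
  obtain ⟨w, hw₁, hw₂⟩ := cdtm hT1 hT3 (𝟙 A) f' (by simp)
  have hwq : w ≫ q = δ₁ := by simpa using hw₂.symm
  obtain ⟨P, j, r, hT4⟩ := distinguished_cocone_triangle₂ (δ₂ ≫ g⟦(1:ℤ)⟧')
  have hP : P ∈ 𝒜 := hext _ hT4 hW₁ hW₂
  have hjr : j ≫ r = 0 := z₁₂ hT4
  obtain ⟨b', hb₁, hb₂'⟩ := cdtm₂ hT2 hT4 g (𝟙 W₂) (by simp)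
  have hb₂ : b' ≫ r = g₂ := by simpa using hb₂'.symm
  obtain ⟨φ, hφ⟩ := ye₂ hT3 b'
    (by rw [Category.assoc, hb₁, ← Category.assoc, hfg, zero_comp])
  have hE : w ≫ φ = j := by
    have hgd : g ≫ (w ≫ φ - j) = 0 := by
      rw [Preadditive.comp_sub, ← Category.assoc, hw₁, Category.assoc, ← hφ, hb₁, sub_self]
    obtain ⟨e, he⟩ := ye₃ hT1 _ hgd
    rw [hvan A hA P hP e, comp_zero] at he
    exact sub_eq_zero.mp he
  have hcond : (δ₂ ≫ g⟦(1:ℤ)⟧') ≫ w⟦(1:ℤ)⟧' = 0 := by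
    have h31 : δ₂ ≫ f'⟦(1:ℤ)⟧' = 0 := z₃₁ hT2
    rw [Category.assoc, ← Functor.map_comp, hw₁, Functor.map_comp, ← Category.assoc,
      h31, zero_comp]
  obtain ⟨k, hk⟩ := ye₄ hT4 (w⟦(1:ℤ)⟧') hcond
  obtain ⟨ψ₀, hψ₀⟩ : ∃ ψ₀ : P ⟶ Q, j ≫ ψ₀ = w := by
    refine ⟨-((shiftFunctor C (1:ℤ)).preimage k), shift_inj ?_⟩
    rw [Functor.map_comp]
    have hp : (shiftFunctor C (1:ℤ)).map (-((shiftFunctor C (1:ℤ)).preimage k)) = -k := by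
      simp
    rw [hp, hk]
    simp
  have hd : f' ≫ (b' ≫ ψ₀ - p) = 0 := by
    rw [Preadditive.comp_sub, ← Category.assoc, hb₁, Category.assoc, hψ₀, hw₁, sub_self]
  obtain ⟨e₅, he₅⟩ := ye₂ hT2 _ hd
  obtain ⟨ψ, hψ₁, hψ₂⟩ : ∃ ψ : P ⟶ Q, j ≫ ψ = w ∧ b' ≫ ψ = p := by
    refine ⟨ψ₀ - r ≫ e₅, ?_, ?_⟩
    · rw [Preadditive.comp_sub, hψ₀, ← Category.assoc, hjr, zero_comp, sub_zero]
    · rw [Preadditive.comp_sub, ← Category.assoc, hb₂]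
      have hb : b' ≫ ψ₀ = p + g₂ ≫ e₅ := by rw [← he₅]; abel
      rw [hb]; abel
  have hpe : p ≫ (φ ≫ ψ - 𝟙 Q) = 0 := by
    rw [Preadditive.comp_sub, ← Category.assoc, ← hφ, hψ₂, Category.comp_id, sub_self]
  obtain ⟨e, he⟩ := ye₃ hT3 _ hpe
  have hδe : δ₁ ≫ e = 0 := by
    have hw0 : w ≫ (φ ≫ ψ - 𝟙 Q) = 0 := by
      rw [Preadditive.comp_sub, ← Category.assoc, hE, hψ₁, Category.comp_id, sub_self]
    rw [he, ← Category.assoc, hwq] at hw0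
    exact hw0
  obtain ⟨e₃, he₃⟩ := ye₄ hT1 e hδe
  obtain ⟨v, hv₁, hv₂⟩ := cdtm hT3 hT2 f (𝟙 Z) (by simp)
  rw [Category.id_comp] at hv₁
  have hL : φ ≫ r = v := by
    have h0 : p ≫ (φ ≫ r - v) = 0 := by
      rw [Preadditive.comp_sub, ← Category.assoc, ← hφ, hb₂, hv₁, sub_self]
    obtain ⟨e₆, he₆⟩ := ye₃ hT3 _ h0
    rw [hvan A hA W₂ hW₂ e₆, comp_zero] at he₆
    exact sub_eq_zero.mp he₆
  have hfinal : φ ≫ (ψ + r ≫ δ₂ ≫ e₃) = 𝟙 Q := by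
    have h3 : q ≫ (f⟦(1:ℤ)⟧' ≫ e₃) = 𝟙 Q - φ ≫ ψ := by
      rw [he₃, Preadditive.comp_neg] at he
      rw [← neg_sub (φ ≫ ψ) (𝟙 Q), he, neg_neg]
    have h1 : φ ≫ (r ≫ δ₂ ≫ e₃) = 𝟙 Q - φ ≫ ψ := by
      rw [← Category.assoc, hL, ← Category.assoc, ← hv₂, Category.assoc, h3]
    rw [Preadditive.comp_add, h1]; abel
  exact hret Q P φ _ hfinal hP

/-- The dual key lemma: the "co-cone" of a composition of two "deflations" lies in `𝒜`. -/
lemma cocone_mem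
    (hret : ∀ (A B : C) (r : A ⟶ B) (s : B ⟶ A), r ≫ s = 𝟙 A → B ∈ 𝒜 → A ∈ 𝒜)
    (hext : ∀ T : Triangle C, T ∈ (distTriang C) → T.obj₁ ∈ 𝒜 → T.obj₃ ∈ 𝒜 → T.obj₂ ∈ 𝒜)
    (hvan : ∀ X ∈ 𝒜, ∀ Y ∈ 𝒜, ∀ φ : X⟦(1 : ℤ)⟧ ⟶ Y, φ = 0)
    {A B Z W₁ W₂ K : C} (hZ : Z ∈ 𝒜) (hW₁ : W₁ ∈ 𝒜) (hW₂ : W₂ ∈ 𝒜)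
    {f₁ : W₁ ⟶ A} {g : A ⟶ B} {δ₁ : B ⟶ W₁⟦(1:ℤ)⟧}
    (hT1 : Triangle.mk f₁ g δ₁ ∈ distTriang C)
    {f₂ : W₂ ⟶ B} {g' : B ⟶ Z} {δ₂ : Z ⟶ W₂⟦(1:ℤ)⟧}
    (hT2 : Triangle.mk f₂ g' δ₂ ∈ distTriang C)
    {k : K ⟶ A} {δ : Z ⟶ K⟦(1:ℤ)⟧}
    (hT3 : Triangle.mk k (g ≫ g') δ ∈ distTriang C) :
    K ∈ 𝒜 := by
  have hf₂g' : f₂ ≫ g' = 0 := z₁₂ hT2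
  have hgδ₁ : g ≫ δ₁ = 0 := z₂₃ hT1
  obtain ⟨w', hw'₁, hw'₂⟩ := cdtm₁ hT3 hT2 g (𝟙 Z) (by simp)
  rw [Category.id_comp] at hw'₂
  obtain ⟨P, j, r, hT4⟩ := distinguished_cocone_triangle₂ (f₂ ≫ δ₁)
  have hP : P ∈ 𝒜 := hext _ hT4 hW₁ hW₂
  have hjr : j ≫ r = 0 := z₁₂ hT4
  obtain ⟨m, hm₁, hm₂⟩ := cdtm₂ hT4 hT1 (𝟙 W₁) f₂ (by simp)
  rw [Category.id_comp] at hm₁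
  obtain ⟨φ', hφ'⟩ := ce₂ hT3 m
    (by rw [← Category.assoc, ← hm₂, Category.assoc, hf₂g', comp_zero])
  have hE : φ' ≫ w' = r := by
    have hd : (φ' ≫ w' - r) ≫ f₂ = 0 := by
      rw [Preadditive.sub_comp, Category.assoc, ← hw'₁, ← Category.assoc, ← hφ', hm₂,
        sub_self]
    obtain ⟨k₀, hk₀⟩ := ce₁ hT2 ((φ' ≫ w' - r)⟦(1:ℤ)⟧')
      (by rw [← Functor.map_comp, hd, Functor.map_zero])
    rw [hvan P hP Z hZ k₀, zero_comp] at hk₀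
    exact sub_eq_zero.mp (shift_inj_zero hk₀)
  obtain ⟨ψ₀, hψ₀⟩ := ce₃ hT4 w'
    (by rw [← Category.assoc, ← hw'₁, Category.assoc, hgδ₁, comp_zero])
  have hd : (ψ₀ ≫ m - k) ≫ g = 0 := by
    rw [Preadditive.sub_comp, Category.assoc, ← hm₂, ← Category.assoc, ← hψ₀, hw'₁,
      sub_self]
  obtain ⟨e₅, he₅⟩ := ce₂ hT1 _ hd
  obtain ⟨ψ, hψ₁, hψ₂⟩ : ∃ ψ : K ⟶ P, ψ ≫ r = w' ∧ ψ ≫ m = k := by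
    refine ⟨ψ₀ - e₅ ≫ j, ?_, ?_⟩
    · rw [Preadditive.sub_comp, ← hψ₀, Category.assoc, hjr, comp_zero, sub_zero]
    · rw [Preadditive.sub_comp, Category.assoc, hm₁]
      have hb : ψ₀ ≫ m = k + e₅ ≫ f₁ := by rw [← he₅]; abel
      rw [hb]; abel
  have hpe : ((ψ ≫ φ' - 𝟙 K) ≫ k) = 0 := by
    rw [Preadditive.sub_comp, Category.assoc, ← hφ', hψ₂, Category.id_comp, sub_self]
  obtain ⟨e, he⟩ := ce₁ hT3 ((ψ ≫ φ' - 𝟙 K)⟦(1:ℤ)⟧')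
    (by rw [← Functor.map_comp, hpe, Functor.map_zero])
  have hδe : e ≫ δ₂ = 0 := by
    have hw0 : (ψ ≫ φ' - 𝟙 K) ≫ w' = 0 := by
      rw [Preadditive.sub_comp, Category.assoc, hE, hψ₁, Category.id_comp, sub_self]
    have hw1 : ((ψ ≫ φ' - 𝟙 K)⟦(1:ℤ)⟧') ≫ w'⟦(1:ℤ)⟧' = 0 := by
      rw [← Functor.map_comp, hw0, Functor.map_zero]
    rw [he, Category.assoc, hw'₂] at hw1
    exact hw1
  obtain ⟨e₃, he₃⟩ := ce₃ hT2 e hδe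
  obtain ⟨v', hv'₁, hv'₂⟩ := cdtm₁ hT1 hT3 (𝟙 A) g' (by simp)
  rw [Category.comp_id] at hv'₁
  have hL : j ≫ φ' = v' := by
    have hd : (j ≫ φ' - v') ≫ k = 0 := by
      rw [Preadditive.sub_comp, Category.assoc, ← hφ', hm₁, ← hv'₁, sub_self]
    obtain ⟨e₆, he₆⟩ := ce₁ hT3 ((j ≫ φ' - v')⟦(1:ℤ)⟧')
      (by rw [← Functor.map_comp, hd, Functor.map_zero])
    rw [hvan W₁ hW₁ Z hZ e₆, zero_comp] at he₆
    exact sub_eq_zero.mp (shift_inj_zero he₆)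
  obtain ⟨c₀, hc₀⟩ : ∃ c₀ : K ⟶ W₁, c₀⟦(1:ℤ)⟧' = e₃ ≫ δ₁ :=
    ⟨(shiftFunctor C (1:ℤ)).preimage (e₃ ≫ δ₁), by simp⟩
  have hcv : c₀ ≫ v' = ψ ≫ φ' - 𝟙 K := by
    apply shift_inj
    rw [Functor.map_comp, hc₀, Category.assoc, hv'₂, he, he₃, Category.assoc]
  have hfinal : (ψ - c₀ ≫ j) ≫ φ' = 𝟙 K := by
    rw [Preadditive.sub_comp, Category.assoc, hL, hcv]; abel
  exact hret K P _ φ' hfinal hP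

/-- Pushouts of conflations along arbitrary maps, at the level of the ambient category. -/
lemma pushout_aux
    (hvan : ∀ X ∈ 𝒜, ∀ Y ∈ 𝒜, ∀ φ : X⟦(1 : ℤ)⟧ ⟶ Y, φ = 0)
    {A B W A' : C} (hA : A ∈ 𝒜)
    {f : A ⟶ B} {g : B ⟶ W} {δ : W ⟶ A⟦(1:ℤ)⟧}
    (hT : Triangle.mk f g δ ∈ distTriang C) (a : A ⟶ A') :
    ∃ (B' : C) (f'' : A' ⟶ B') (g'' : B' ⟶ W) (b : B ⟶ B'),
      (Triangle.mk f'' g'' (δ ≫ a⟦(1:ℤ)⟧') ∈ distTriang C) ∧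
      f ≫ b = a ≫ f'' ∧ b ≫ g'' = g ∧
      (∀ (U : C) (β : B ⟶ U) (α : A' ⟶ U), f ≫ β = a ≫ α →
        ∃ γ : B' ⟶ U, b ≫ γ = β ∧ f'' ≫ γ = α) ∧
      (∀ (U : C), U ∈ 𝒜 → ∀ (γ₁ γ₂ : B' ⟶ U),
        b ≫ γ₁ = b ≫ γ₂ → f'' ≫ γ₁ = f'' ≫ γ₂ → γ₁ = γ₂) := by
  obtain ⟨B', f'', g'', hT'⟩ := distinguished_cocone_triangle₂ (δ ≫ a⟦(1:ℤ)⟧')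
  obtain ⟨b, hb₁, hb₂⟩ := cdtm₂ hT hT' a (𝟙 W) (by simp)
  rw [Category.comp_id] at hb₂
  refine ⟨B', f'', g'', b, hT', hb₁, hb₂.symm, ?_, ?_⟩
  · intro U β α hc
    obtain ⟨k, hk⟩ := ye₄ hT' (α⟦(1:ℤ)⟧') (by
      rw [Category.assoc, ← Functor.map_comp, ← hc, Functor.map_comp, ← Category.assoc,
        z₃₁ hT, zero_comp])
    obtain ⟨γ₀, hγ₀⟩ : ∃ γ₀ : B' ⟶ U, f'' ≫ γ₀ = α := by
      refine ⟨-((shiftFunctor C (1:ℤ)).preimage k), shift_inj ?_⟩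
      rw [Functor.map_comp]
      have hp : (shiftFunctor C (1:ℤ)).map (-((shiftFunctor C (1:ℤ)).preimage k)) = -k := by
        simp
      rw [hp, hk]; simp
    have hd : f ≫ (b ≫ γ₀ - β) = 0 := by
      rw [Preadditive.comp_sub, ← Category.assoc, hb₁, Category.assoc, hγ₀, hc, sub_self]
    obtain ⟨ε₀, hε₀⟩ := ye₂ hT _ hd
    refine ⟨γ₀ - g'' ≫ ε₀, ?_, ?_⟩
    · rw [Preadditive.comp_sub, ← Category.assoc, hb₂.symm]
      have hb' : b ≫ γ₀ = β + g ≫ ε₀ := by rw [← hε₀]; abel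
      rw [hb']; abel
    · rw [Preadditive.comp_sub, ← Category.assoc, z₁₂ hT', zero_comp, sub_zero, hγ₀]
  · intro U hU γ₁ γ₂ h1 h2
    have hd : f'' ≫ (γ₁ - γ₂) = 0 := by rw [Preadditive.comp_sub, h2, sub_self]
    obtain ⟨e, he⟩ := ye₂ hT' _ hd
    have hge : g ≫ e = 0 := by
      rw [hb₂, Category.assoc, ← he, Preadditive.comp_sub, h1, sub_self]
    obtain ⟨e₂, he₂⟩ := ye₃ hT e hge
    rw [hvan A hA U hU e₂, comp_zero] at he₂
    rw [he₂, comp_zero] at he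
    exact sub_eq_zero.mp he

/-- Pullbacks of conflations along arbitrary maps, at the level of the ambient category. -/
lemma pullback_aux
    (hvan : ∀ X ∈ 𝒜, ∀ Y ∈ 𝒜, ∀ φ : X⟦(1 : ℤ)⟧ ⟶ Y, φ = 0)
    {A B Z Z' : C} (hZ : Z ∈ 𝒜)
    {f : A ⟶ B} {g : B ⟶ Z} {δ : Z ⟶ A⟦(1:ℤ)⟧}
    (hT : Triangle.mk f g δ ∈ distTriang C) (c : Z' ⟶ Z) :
    ∃ (B' : C) (f₂ : A ⟶ B') (g₂ : B' ⟶ Z') (b : B' ⟶ B),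
      (Triangle.mk f₂ g₂ (c ≫ δ) ∈ distTriang C) ∧
      f₂ ≫ b = f ∧ g₂ ≫ c = b ≫ g ∧
      (∀ (U : C) (u : U ⟶ B) (v : U ⟶ Z'), u ≫ g = v ≫ c →
        ∃ γ : U ⟶ B', γ ≫ b = u ∧ γ ≫ g₂ = v) ∧
      (∀ (U : C), U ∈ 𝒜 → ∀ (γ₁ γ₂ : U ⟶ B'),
        γ₁ ≫ b = γ₂ ≫ b → γ₁ ≫ g₂ = γ₂ ≫ g₂ → γ₁ = γ₂) := by
  obtain ⟨B', f₂, g₂, hT'⟩ := distinguished_cocone_triangle₂ (c ≫ δ)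
  obtain ⟨b, hb₁, hb₂⟩ := cdtm₂ hT' hT (𝟙 A) c (by simp)
  rw [Category.id_comp] at hb₁
  refine ⟨B', f₂, g₂, b, hT', hb₁, hb₂, ?_, ?_⟩
  · intro U u v hc
    obtain ⟨γ₀, hγ₀⟩ := ce₃ hT' v (by
      rw [← Category.assoc, ← hc, Category.assoc, z₂₃ hT, comp_zero])
    have hd : (γ₀ ≫ b - u) ≫ g = 0 := by
      rw [Preadditive.sub_comp, Category.assoc, ← hb₂, ← Category.assoc, ← hγ₀, hc,
        sub_self]
    obtain ⟨e₀, he₀⟩ := ce₂ hT _ hd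
    refine ⟨γ₀ - e₀ ≫ f₂, ?_, ?_⟩
    · rw [Preadditive.sub_comp, Category.assoc, hb₁]
      have hb' : γ₀ ≫ b = u + e₀ ≫ f := by rw [← he₀]; abel
      rw [hb']; abel
    · rw [Preadditive.sub_comp, Category.assoc, z₁₂ hT', comp_zero, sub_zero, hγ₀]
  · intro U hU γ₁ γ₂ h1 h2
    have hd : (γ₁ - γ₂) ≫ g₂ = 0 := by rw [Preadditive.sub_comp, h2, sub_self]
    obtain ⟨e, he⟩ := ce₂ hT' _ hd
    have hef : e ≫ f = 0 := by
      rw [← hb₁, ← Category.assoc, ← he, Preadditive.sub_comp, h1, sub_self]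
    obtain ⟨e₂, he₂⟩ := ce₁ hT (e⟦(1:ℤ)⟧')
      (by rw [← Functor.map_comp, hef, Functor.map_zero])
    rw [hvan U hU Z hZ e₂, zero_comp] at he₂
    rw [shift_inj_zero he₂, zero_comp] at he
    exact sub_eq_zero.mp he

end Aux

/-- Dyer's theorem; the `n = 1` case of the paper's main result.
Let `T` be a Krull–Schmidt triangulated category and `𝒜` a full subcategory closed under
isomorphisms, direct sums, direct summands and extensions, with `Hom(𝒜[1], 𝒜) = 0`.  Then
`𝒜` carries the structure of a Quillen exact category whose conflations are the sequences
`X → Y → Z` in `𝒜` fitting into a distinguished triangle `X → Y → Z → X[1]` of `T`. -/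
theorem stmt15 {C : Type u} [Category.{v} C] [Preadditive C] [HasZeroObject C]
    [HasShift C ℤ] [∀ k : ℤ, (shiftFunctor C k).Additive] [Pretriangulated C]
    [HasFiniteBiproducts C] (hKS : IsKrullSchmidt C)
    (𝒜 : Set C) (hgood : GoodSubcat 𝒜)
    (hext : ∀ T : Triangle C, T ∈ (distTriang C) → T.obj₁ ∈ 𝒜 → T.obj₃ ∈ 𝒜 → T.obj₂ ∈ 𝒜)
    (hvan : ∀ X ∈ 𝒜, ∀ Y ∈ 𝒜, ∀ φ : X⟦(1 : ℤ)⟧ ⟶ Y, φ = 0) :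
    ∃ Q : QuillenExactCategory (ObjectProperty.FullSubcategory (· ∈ 𝒜)),
      ∀ (X Y Z : ObjectProperty.FullSubcategory (· ∈ 𝒜)) (f : X ⟶ Y) (g : Y ⟶ Z),
        Q.conflation f g ↔
          ∃ h : (ObjectProperty.ι (· ∈ 𝒜)).obj Z ⟶
              ((ObjectProperty.ι (· ∈ 𝒜)).obj X)⟦(1 : ℤ)⟧,
            Triangle.mk ((ObjectProperty.ι (· ∈ 𝒜)).map f)
              ((ObjectProperty.ι (· ∈ 𝒜)).map g) h ∈ distTriang C := by
  classical
  refine ⟨{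
      conflation := fun A B Z f g =>
        ∃ h : (ObjectProperty.ι (· ∈ 𝒜)).obj Z ⟶
            ((ObjectProperty.ι (· ∈ 𝒜)).obj A)⟦(1 : ℤ)⟧,
          Triangle.mk ((ObjectProperty.ι (· ∈ 𝒜)).map f)
            ((ObjectProperty.ι (· ∈ 𝒜)).map g) h ∈ distTriang C
      comp_zero := by
        rintro A B Z f g ⟨h, hT⟩
        exact InducedCategory.hom_ext (z₁₂ (C := C) hT)
      ker := by
        rintro A B Z f g ⟨h, hT⟩ W u hu
        obtain ⟨k, hk⟩ := ce₂ hT u.hom (congrArg InducedCategory.Hom.hom hu)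
        exact ⟨ObjectProperty.homMk k, InducedCategory.hom_ext hk.symm, fun y hy =>
          InducedCategory.hom_ext (conf_ker_uniq hvan hT W.2 Z.2 ((congrArg InducedCategory.Hom.hom hy).trans hk))⟩
      cok := by
        rintro A B Z f g ⟨h, hT⟩ W u hu
        obtain ⟨k, hk⟩ := ye₂ hT u.hom (congrArg InducedCategory.Hom.hom hu)
        exact ⟨ObjectProperty.homMk k, InducedCategory.hom_ext hk.symm, fun y hy =>
          InducedCategory.hom_ext (conf_cok_uniq hvan hT A.2 W.2 ((congrArg InducedCategory.Hom.hom hy).trans hk))⟩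
      iso_closed := by
        rintro A B Z A' B' Z' f g eA eB eZ f' g' ⟨h, hT⟩ c1 c2
        exact ⟨_, iso_tri ((ObjectProperty.ι (· ∈ 𝒜)).mapIso eA)
          ((ObjectProperty.ι (· ∈ 𝒜)).mapIso eB)
          ((ObjectProperty.ι (· ∈ 𝒜)).mapIso eZ) hT (congrArg InducedCategory.Hom.hom c1) (congrArg InducedCategory.Hom.hom c2)⟩
      id_infl := by
        intro A
        have h0 : (0 : C) ∈ 𝒜 :=
          hgood.2.2 0 A.obj 0 0 ((isZero_zero C).eq_of_src _ _) A.2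
        exact ⟨⟨0, h0⟩, 0, 0, contractible_distinguished A.obj⟩
      id_defl := by
        intro A
        have h0 : (0 : C) ∈ 𝒜 :=
          hgood.2.2 0 A.obj 0 0 ((isZero_zero C).eq_of_src _ _) A.2
        exact ⟨⟨0, h0⟩, 0, 0, contractible_distinguished₁ A.obj⟩
      infl_comp := by
        rintro A B Z f f' ⟨W₁, g, h₁, hT1⟩ ⟨W₂, g₂, h₂, hT2⟩
        obtain ⟨Q, p, q, hT3⟩ := Pretriangulated.distinguished_cocone_triangle
          ((ObjectProperty.ι (· ∈ 𝒜)).map f ≫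
            (ObjectProperty.ι (· ∈ 𝒜)).map f')
        exact ⟨⟨Q, cone_mem hgood.2.2 hext hvan A.2 W₁.2 W₂.2 hT1 hT2 hT3⟩, ObjectProperty.homMk p, q, hT3⟩
      defl_comp := by
        rintro A B Z g g' ⟨W₁, f₁, h₁, hT1⟩ ⟨W₂, f₂, h₂, hT2⟩
        obtain ⟨K, k, δ, hT3⟩ := Pretriangulated.distinguished_cocone_triangle₁
          ((ObjectProperty.ι (· ∈ 𝒜)).map g ≫
            (ObjectProperty.ι (· ∈ 𝒜)).map g')
        exact ⟨⟨K, cocone_mem hgood.2.2 hext hvan Z.2 W₁.2 W₂.2 hT1 hT2 hT3⟩, ObjectProperty.homMk k, δ, hT3⟩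
      pushout := by
        rintro A B Z f g ⟨h, hT⟩ A' a
        obtain ⟨B', f'', g'', b, hT', hb₁, hb₂, hexist, huniq⟩ :=
          pushout_aux hvan A.2 hT ((ObjectProperty.ι (· ∈ 𝒜)).map a)
        have hB' : B' ∈ 𝒜 := hext _ hT' A'.2 Z.2
        let B'' : ObjectProperty.FullSubcategory (· ∈ 𝒜) := ⟨B', hB'⟩
        let b' : B ⟶ B'' := ObjectProperty.homMk b
        let f''' : A' ⟶ B'' := ObjectProperty.homMk f''
        have w : f ≫ b' = a ≫ f''' := InducedCategory.hom_ext hb₁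
        refine ⟨B'', f''', b', ?_, Z, ObjectProperty.homMk g'', ⟨_, hT'⟩⟩
        exact IsPushout.of_isColimit (PushoutCocone.IsColimit.mk w
          (fun s => ObjectProperty.homMk (Classical.choose (hexist s.pt.obj s.inl.hom s.inr.hom (congrArg InducedCategory.Hom.hom s.condition))))
          (fun s => InducedCategory.hom_ext (Classical.choose_spec (hexist s.pt.obj s.inl.hom s.inr.hom (congrArg InducedCategory.Hom.hom s.condition))).1)
          (fun s => InducedCategory.hom_ext (Classical.choose_spec (hexist s.pt.obj s.inl.hom s.inr.hom (congrArg InducedCategory.Hom.hom s.condition))).2)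
          (fun s m hm1 hm2 => InducedCategory.hom_ext <| huniq s.pt.obj s.pt.2 m.hom _
            ((congrArg InducedCategory.Hom.hom hm1).trans
              (Classical.choose_spec (hexist s.pt.obj s.inl.hom s.inr.hom (congrArg InducedCategory.Hom.hom s.condition))).1.symm)
            ((congrArg InducedCategory.Hom.hom hm2).trans
              (Classical.choose_spec (hexist s.pt.obj s.inl.hom s.inr.hom (congrArg InducedCategory.Hom.hom s.condition))).2.symm)))
      pullback := by
        rintro A B Z f g ⟨h, hT⟩ Z' c
        obtain ⟨B', f₂, g₂, b, hT', hb₁, hb₂, hexist, huniq⟩ :=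
          pullback_aux hvan Z.2 hT ((ObjectProperty.ι (· ∈ 𝒜)).map c)
        have hB' : B' ∈ 𝒜 := hext _ hT' A.2 Z'.2
        let B'' : ObjectProperty.FullSubcategory (· ∈ 𝒜) := ⟨B', hB'⟩
        let b' : B'' ⟶ B := ObjectProperty.homMk b
        let g₂' : B'' ⟶ Z' := ObjectProperty.homMk g₂
        have w : b' ≫ g = g₂' ≫ c := InducedCategory.hom_ext hb₂.symm
        refine ⟨B'', g₂', b', ?_, A, ObjectProperty.homMk f₂, ⟨_, hT'⟩⟩
        exact IsPullback.of_isLimit (PullbackCone.IsLimit.mk w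
          (fun s => ObjectProperty.homMk (Classical.choose (hexist s.pt.obj s.fst.hom s.snd.hom (congrArg InducedCategory.Hom.hom s.condition))))
          (fun s => InducedCategory.hom_ext (Classical.choose_spec (hexist s.pt.obj s.fst.hom s.snd.hom (congrArg InducedCategory.Hom.hom s.condition))).1)
          (fun s => InducedCategory.hom_ext (Classical.choose_spec (hexist s.pt.obj s.fst.hom s.snd.hom (congrArg InducedCategory.Hom.hom s.condition))).2)
          (fun s m hm1 hm2 => InducedCategory.hom_ext <| huniq s.pt.obj s.pt.2 m.hom _
            ((congrArg InducedCategory.Hom.hom hm1).trans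
              (Classical.choose_spec (hexist s.pt.obj s.fst.hom s.snd.hom (congrArg InducedCategory.Hom.hom s.condition))).1.symm)
            ((congrArg InducedCategory.Hom.hom hm2).trans
              (Classical.choose_spec (hexist s.pt.obj s.fst.hom s.snd.hom (congrArg InducedCategory.Hom.hom s.condition))).2.symm)))
      }, fun X Y Z f g => Iff.rfl⟩

end NExangPaper
end

section
/- Let T be a Krull–Schmidt triangulated category and A an extension-closed full subcategory with Hom_T(A[1], A) = 0. Let a : A → B and b : B → C be morphisms in A such that b∘a occurs in a distinguished triangle A →(b∘a) C → Z → A[1] with Z ∈ A. Then a occurs in a distinguished triangle A →(a) B → Z' → A[1] with Z' ∈ A. -/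
open CategoryTheory CategoryTheory.Limits CategoryTheory.Pretriangulated Opposite ZeroObject

universe v u

namespace NExangPaper

attribute [local instance] CategoryTheory.Limits.hasBinaryBiproducts_of_finite_biproducts

variable {C : Type u} [Category.{v} C] [Preadditive C]

open Category Preadditive in
/-- Let `T` be a Krull–Schmidt triangulated category and `𝒜` an
extension-closed subcategory with `Hom(𝒜[1], 𝒜) = 0`.  If `a : A ⟶ B` and `b : B ⟶ Z` are
morphisms in `𝒜` such that `b ∘ a` occurs in a distinguished triangle with cone in `𝒜`,
then `a` also occurs in a distinguished triangle with cone in `𝒜`. -/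
theorem stmt17 {C : Type u} [Category.{v} C] [Preadditive C] [HasZeroObject C]
    [HasShift C ℤ] [∀ k : ℤ, (shiftFunctor C k).Additive] [Pretriangulated C]
    [HasFiniteBiproducts C] (hKS : IsKrullSchmidt C)
    (𝒜 : Set C) (hgood : GoodSubcat 𝒜)
    (hext : ∀ T : Triangle C, T ∈ (distTriang C) → T.obj₁ ∈ 𝒜 → T.obj₃ ∈ 𝒜 → T.obj₂ ∈ 𝒜)
    (hvan : ∀ X ∈ 𝒜, ∀ Y ∈ 𝒜, ∀ φ : X⟦(1 : ℤ)⟧ ⟶ Y, φ = 0)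
    {A B Z : C} (hA : A ∈ 𝒜) (hB : B ∈ 𝒜) (hZ : Z ∈ 𝒜)
    (a : A ⟶ B) (b : B ⟶ Z)
    {Cn : C} (hCn : Cn ∈ 𝒜) (g : Z ⟶ Cn) (h : Cn ⟶ A⟦(1 : ℤ)⟧)
    (hT : Triangle.mk (a ≫ b) g h ∈ distTriang C) :
    ∃ (Cn' : C), Cn' ∈ 𝒜 ∧ ∃ (g' : B ⟶ Cn') (h' : Cn' ⟶ A⟦(1 : ℤ)⟧),
      Triangle.mk a g' h' ∈ distTriang C := by
  -- vanishing for maps into negative shifts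
  have hvan' : ∀ X ∈ 𝒜, ∀ Y' ∈ 𝒜, ∀ f : X ⟶ Y'⟦(-1 : ℤ)⟧, f = 0 := by
    intro X hX Y' hY' f
    have h0 : (shiftFunctor C (1 : ℤ)).map f ≫
        (shiftEquiv C (1 : ℤ)).counitIso.hom.app Y' = 0 :=
      hvan X hX Y' hY' _
    have h1 : (shiftFunctor C (1 : ℤ)).map f = 0 := by
      exact (cancel_mono ((shiftEquiv C (1 : ℤ)).counitIso.hom.app Y')).1 (h0.trans zero_comp.symm)
    exact (shiftFunctor C (1 : ℤ)).map_injective (by simpa using h1)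
  -- complete a to a triangle
  obtain ⟨Y, i, j, hT1⟩ := distinguished_cocone_triangle a
  have hai : a ≫ i = 0 := comp_distTriang_mor_zero₁₂ _ hT1
  have hij : i ≫ j = 0 := comp_distTriang_mor_zero₂₃ _ hT1
  have hja : j ≫ a⟦(1 : ℤ)⟧' = 0 := comp_distTriang_mor_zero₃₁ _ hT1
  have hgh : g ≫ h = 0 := comp_distTriang_mor_zero₂₃ _ hT
  -- comparison map c : Y ⟶ Cn
  obtain ⟨c, hc₁', hc₂⟩ :
      ∃ c : Y ⟶ Cn, i ≫ c = b ≫ g ∧ j ≫ (𝟙 A)⟦(1 : ℤ)⟧' = c ≫ h :=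
    complete_distinguished_triangle_morphism
      (Triangle.mk a i j) (Triangle.mk (a ≫ b) g h) hT1 hT (𝟙 A) b (by exact (Category.id_comp _).symm)
  have hc₂' : j = c ≫ h := by simpa using hc₂
  -- the map u = (b, i) : B ⟶ Z ⊞ Y and its cone V
  set u : B ⟶ Z ⊞ Y := biprod.lift b i with hu
  obtain ⟨V, v, w, hTv⟩ := distinguished_cocone_triangle u
  have huv : u ≫ v = 0 := comp_distTriang_mor_zero₁₂ _ hTv
  have hvw : v ≫ w = 0 := comp_distTriang_mor_zero₂₃ _ hTv
  have hwu : w ≫ u⟦(1 : ℤ)⟧' = 0 := comp_distTriang_mor_zero₃₁ _ hTv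
  -- σ : Cn ⟶ V
  obtain ⟨σ, hσ₁', hσ₂'⟩ :
      ∃ σ : Cn ⟶ V, g ≫ σ = biprod.inl ≫ v ∧ h ≫ a⟦(1 : ℤ)⟧' = σ ≫ w :=
    complete_distinguished_triangle_morphism
      (Triangle.mk (a ≫ b) g h) (Triangle.mk u v w) hT hTv a biprod.inl (by
        apply biprod.hom_ext
        · show ((a ≫ b) ≫ (biprod.inl : Z ⟶ Z ⊞ Y)) ≫ biprod.fst = (a ≫ biprod.lift b i) ≫ biprod.fst
          simp [hu]
        · show ((a ≫ b) ≫ (biprod.inl : Z ⟶ Z ⊞ Y)) ≫ biprod.snd = (a ≫ biprod.lift b i) ≫ biprod.snd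
          simp [hu, hai])
  -- ρ : V ⟶ Cn
  set β : Z ⊞ Y ⟶ Cn := biprod.desc g (-c) with hβ
  have huβ : u ≫ β = 0 := by
    simp [hu, hβ, biprod.lift_desc, hc₁']
  obtain ⟨ρ, hρ'⟩ : ∃ ρ : V ⟶ Cn, β = v ≫ ρ :=
    Triangle.yoneda_exact₂ _ hTv β huβ
  -- σ ≫ ρ = 𝟙
  have hσρ : σ ≫ ρ = 𝟙 Cn := by
    have h1 : g ≫ (σ ≫ ρ - 𝟙 Cn) = 0 := by
      rw [comp_sub, ← assoc, hσ₁', assoc, ← hρ']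
      simp [hβ]
    obtain ⟨ψ, hψ⟩ := Triangle.yoneda_exact₃ _ hT _ h1
    rw [hvan A hA Cn hCn ψ] at hψ; replace hψ : σ ≫ ρ - 𝟙 Cn = 0 := hψ.trans comp_zero
    rw [sub_eq_zero] at hψ
    exact hψ
  -- κ = c ≫ σ + inr ≫ v vanishes
  have hκw : (c ≫ σ + biprod.inr ≫ v) ≫ w = 0 := by
    rw [add_comp, assoc, assoc, hvw, comp_zero, add_zero, ← hσ₂', ← assoc, ← hc₂', hja]
  obtain ⟨l, hl'⟩ : ∃ l : Y ⟶ Z ⊞ Y, c ≫ σ + biprod.inr ≫ v = l ≫ v :=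
    Triangle.coyoneda_exact₃ _ hTv _ hκw
  have hκρ : (c ≫ σ + biprod.inr ≫ v) ≫ ρ = 0 := by
    rw [add_comp, assoc, hσρ, comp_id, assoc, ← hρ']
    simp [hβ]
  have hlβ : l ≫ β = 0 := by rw [hρ', ← assoc, ← hl', hκρ]
  set l₁ : Y ⟶ Z := l ≫ biprod.fst with hl₁
  set l₂ : Y ⟶ Y := l ≫ biprod.snd with hl₂
  have hldec : l = biprod.lift l₁ l₂ := by
    apply biprod.hom_ext <;> simp [hl₁, hl₂]
  have hrel : l₁ ≫ g = l₂ ≫ c := by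
    rw [hldec] at hlβ
    rw [hβ, biprod.lift_desc, comp_neg, ← sub_eq_add_neg, sub_eq_zero] at hlβ
    exact hlβ
  have hl₂j : l₂ ≫ j = 0 := by
    rw [hc₂', ← assoc, ← hrel, assoc, hgh, comp_zero]
  obtain ⟨b', hb''⟩ : ∃ b' : Y ⟶ B, l₂ = b' ≫ i :=
    Triangle.coyoneda_exact₃ _ hT1 l₂ hl₂j
  have hxg : (l₁ - b' ≫ b) ≫ g = 0 := by
    rw [sub_comp, hrel, hb'', assoc, assoc, hc₁', sub_self]
  obtain ⟨t', ht''⟩ : ∃ t' : Y ⟶ A, l₁ - b' ≫ b = t' ≫ (a ≫ b) :=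
    Triangle.coyoneda_exact₂ _ hT _ hxg
  have hκ : c ≫ σ + biprod.inr ≫ v = 0 := by
    have hl₁' : l₁ = b' ≫ b + t' ≫ (a ≫ b) := by rw [← ht'']; abel
    have hlu : l = (b' + t' ≫ a) ≫ u := by
      apply biprod.hom_ext
      · rw [hldec, biprod.lift_fst, Category.assoc, hu, biprod.lift_fst,
          Preadditive.add_comp, Category.assoc]
        exact hl₁'
      · rw [hldec, biprod.lift_snd, Category.assoc, hu, biprod.lift_snd,
          Preadditive.add_comp, Category.assoc, hai, comp_zero, add_zero]
        exact hb''
    rw [hl', hlu, Category.assoc, huv, comp_zero]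
  -- β ≫ σ = v
  have hcσ : c ≫ σ = -(biprod.inr ≫ v) := eq_neg_of_add_eq_zero_left hκ
  have hβσ : β ≫ σ = v := by
    apply biprod.hom_ext'
    · rw [← Category.assoc, hβ, biprod.inl_desc, hσ₁']
    · rw [← Category.assoc, hβ, biprod.inr_desc, Preadditive.neg_comp, hcσ, neg_neg]
  -- ε := 𝟙 V - ρ ≫ σ factors through w
  have hvε : v ≫ (𝟙 V - ρ ≫ σ) = 0 := by
    rw [comp_sub, comp_id, ← assoc, ← hρ', hβσ, sub_self]
  obtain ⟨ζ, hζ'⟩ : ∃ ζ : B⟦(1 : ℤ)⟧ ⟶ V, 𝟙 V - ρ ≫ σ = w ≫ ζ :=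
    Triangle.yoneda_exact₃ _ hTv _ hvε
  -- the composite m = ζ ≫ w is zero
  have hm : ζ ≫ w = 0 := by
    obtain ⟨m₀, hm₀⟩ := (shiftFunctor C (1 : ℤ)).map_surjective (ζ ≫ w)
    have hmu : m₀ ≫ u = 0 := by
      apply (shiftFunctor C (1 : ℤ)).map_injective
      rw [Functor.map_comp, hm₀, assoc, hwu, comp_zero, Functor.map_zero]
    have hm₀b : m₀ ≫ b = 0 := by
      have : m₀ ≫ u ≫ biprod.fst = 0 := by rw [← assoc, hmu, zero_comp]
      simpa [hu] using this
    have hm₀i : m₀ ≫ i = 0 := by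
      have : m₀ ≫ u ≫ biprod.snd = 0 := by rw [← assoc, hmu, zero_comp]
      simpa [hu] using this
    obtain ⟨t, ht⟩ : ∃ t : B ⟶ A, m₀ = t ≫ a :=
      Triangle.coyoneda_exact₂ _ hT1 m₀ hm₀i
    have htab : t ≫ (a ≫ b) = 0 := by rw [← assoc, ← ht, hm₀b]
    obtain ⟨t₁, ht₁⟩ : ∃ t₁ : B ⟶ Cn⟦(-1 : ℤ)⟧,
        t = t₁ ≫ (Triangle.mk (a ≫ b) g h).invRotate.mor₁ :=
      Triangle.coyoneda_exact₂ _ (inv_rot_of_distTriang _ hT) t htab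
    have ht₁0 : t₁ = 0 := hvan' B hB Cn hCn t₁
    have ht0 : t = 0 := by rw [ht₁, ht₁0]; exact zero_comp
    have hm₀0 : m₀ = 0 := by rw [ht, ht0, zero_comp]
    rw [← hm₀, hm₀0, Functor.map_zero]
  -- hence ρ ≫ σ = 𝟙 V
  have hρσ : ρ ≫ σ = 𝟙 V := by
    have he : (𝟙 V - ρ ≫ σ) ≫ (𝟙 V - ρ ≫ σ) = 𝟙 V - ρ ≫ σ := by
      have : (ρ ≫ σ) ≫ (ρ ≫ σ) = ρ ≫ σ := by
        rw [assoc, ← assoc σ ρ σ, hσρ, id_comp]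
      simp only [sub_comp, comp_sub, id_comp, comp_id, this]
      abel
    have hz : (𝟙 V - ρ ≫ σ) ≫ (𝟙 V - ρ ≫ σ) = 0 := by
      rw [hζ', assoc, ← assoc ζ w ζ, hm, zero_comp, comp_zero]
    have he2 : 𝟙 V - ρ ≫ σ = 0 := he.symm.trans hz
    rw [sub_eq_zero] at he2
    exact he2.symm
  -- V ≅ Cn, so V ∈ 𝒜
  have hViso : Cn ≅ V := ⟨σ, ρ, hσρ, hρσ⟩
  have hV : V ∈ 𝒜 := hgood.1 Cn V hCn hViso
  -- Z ⊞ Y ∈ 𝒜 by extension closure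
  have hZY : (Z ⊞ Y) ∈ 𝒜 := hext (Triangle.mk u v w) hTv hB hV
  -- Y is a direct summand
  have hY : Y ∈ 𝒜 := hgood.2.2 Y (Z ⊞ Y) biprod.inr biprod.snd biprod.inr_snd hZY
  exact ⟨Y, hY, i, j, hT1⟩

end NExangPaper
end
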